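/- arXiv:1501.04600 — 8 statements merged into one kernel-verified Lean document; each statement's English description precedes it below -/
import Mathlib

section
/- Let ℓ be a prime, m, n ≥ 1, g an endomorphism of ℤ_ℓ^m with characteristic polynomial p_g, and λ ∈ ℤ_ℓ, w ∈ ℤ_ℓ^m with g·w ≡ λ·w (mod ℓ^n). If at least one coordinate of w has ℓ-adic valuation at most b, then p_g(λ) ≡ 0 (mod ℓ^{n−b}). -/
open Matrix

lemma padic_div_of_mul {p : ℕ} [Fact p.Prime] (d x : ℤ_[p]) (n b : ℕ)
    (h : (p : ℤ_[p]) ^ n ∣ d * x) (hx : ¬ ((p : ℤ_[p]) ^ (b + 1) ∣ x)) :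
    (p : ℤ_[p]) ^ (n - b) ∣ d := by
  rcases eq_or_ne d 0 with rfl | hd
  · exact dvd_zero _
  have hx0 : x ≠ 0 := by rintro rfl; exact hx (dvd_zero _)
  have hdx : d * x ≠ 0 := mul_ne_zero hd hx0
  have hdvd_iff : ∀ (z : ℤ_[p]) (k : ℕ), z ≠ 0 → ((p : ℤ_[p]) ^ k ∣ z ↔ (k : ℤ) ≤ z.valuation) := by
    intro z k hz
    rw [← Ideal.mem_span_singleton, PadicInt.mem_span_pow_iff_le_valuation z hz]
    exact Nat.cast_le.symm
  have h1 : (n : ℤ) ≤ (d * x).valuation := (hdvd_iff _ _ hdx).mp h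
  have h2 : ¬ ((b + 1 : ℕ) : ℤ) ≤ x.valuation := fun hle => hx ((hdvd_iff _ _ hx0).mpr hle)
  have hxb : x.valuation ≤ (b : ℤ) := by push_neg at h2; omega
  have hmul : (d * x).valuation = d.valuation + x.valuation := by
    exact PadicInt.valuation_mul hd hx0
  have hdval : ((n - b : ℕ) : ℤ) ≤ d.valuation := by
    rw [hmul] at h1
    have hd0 : 0 ≤ d.valuation := Nat.zero_le _
    omega
  exact (hdvd_iff _ _ hd).mpr hdval

/-- If `g · w ≡ λ · w (mod ℓ^n)` coordinatewise and some coordinate of `w`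
has `ℓ`-adic valuation at most `b`, then the characteristic polynomial of `g`
vanishes at `λ` modulo `ℓ^{n-b}`. -/
theorem charpoly_approx_eigenvalue (p : ℕ) [Fact p.Prime] (m : ℕ) (hm : 1 ≤ m)
    (n b : ℕ) (hn : 1 ≤ n)
    (g : Matrix (Fin m) (Fin m) ℤ_[p]) (lam : ℤ_[p]) (w : Fin m → ℤ_[p])
    (hcong : ∀ i, (p : ℤ_[p]) ^ n ∣ (g.mulVec w - lam • w) i)
    (hw : ∃ i, ¬ ((p : ℤ_[p]) ^ (b + 1) ∣ w i)) :
    (p : ℤ_[p]) ^ (n - b) ∣ g.charpoly.eval lam := by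
  set A : Matrix (Fin m) (Fin m) ℤ_[p] := lam • (1 : Matrix (Fin m) (Fin m) ℤ_[p]) - g with hA
  -- charpoly eval equals det A
  have hchar : g.charpoly.eval lam = A.det := by
    rw [Matrix.charpoly, ← Polynomial.coe_evalRingHom, RingHom.map_det]
    congr 1
    ext i j
    by_cases h : i = j
    · subst h
      simp [Matrix.charmatrix_apply_eq, Matrix.one_apply, hA]
    · simp [Matrix.charmatrix_apply_ne _ _ _ h, Matrix.one_apply_ne h, hA]
  -- A.mulVec w has all coordinates divisible by p^n
  have hAw : ∀ i, (p : ℤ_[p]) ^ n ∣ A.mulVec w i := by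
    intro i
    have : A.mulVec w i = -(g.mulVec w - lam • w) i := by
      simp [hA, Matrix.sub_mulVec, Matrix.smul_mulVec, Matrix.one_mulVec]
    rw [this]
    exact (hcong i).neg_right
  -- det A • w = adjugate A ⬝ (A ⬝ w)
  have hkey : ∀ i, A.det * w i = (A.adjugate.mulVec (A.mulVec w)) i := by
    intro i
    rw [Matrix.mulVec_mulVec, Matrix.adjugate_mul, Matrix.smul_mulVec,
      Matrix.one_mulVec]
    rfl
  obtain ⟨i, hi⟩ := hw
  have hdvd : (p : ℤ_[p]) ^ n ∣ A.det * w i := by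
    rw [hkey i, Matrix.mulVec, dotProduct]
    exact Finset.dvd_sum fun j _ => Dvd.dvd.mul_left (hAw j) _
  rw [hchar]
  exact padic_div_of_mul A.det (w i) n b hdvd hi
end

section
/- Let ℓ be a prime, g ∈ 𝔰𝔩₂(ℤ_ℓ), w ∈ ℤ_ℓ², and let β be the minimal valuation of the coordinates of w. Suppose g·w ≡ λ·w (mod ℓ^n) for some λ ∈ ℤ_ℓ. Then either the characteristic polynomial of g has a root ν ∈ ℤ_ℓ with v_ℓ(ν − λ) ≥ v_ℓ(λ) + 3, or β ≥ n − 2(2 + v_ℓ(λ)). -/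
open Polynomial

private lemma padic_dvd_iff_norm_le {p : ℕ} [Fact p.Prime] (k : ℕ) (x : ℤ_[p]) :
    (p : ℤ_[p]) ^ k ∣ x ↔ ‖x‖ ≤ (p : ℝ) ^ (-(k : ℤ)) := by
  rw [PadicInt.norm_le_pow_iff_mem_span_pow, Ideal.mem_span_singleton]

private lemma padic_not_dvd_norm_ge {p : ℕ} [Fact p.Prime] (k : ℕ) (x : ℤ_[p])
    (h : ¬ (p : ℤ_[p]) ^ (k + 1) ∣ x) : (p : ℝ) ^ (-(k : ℤ)) ≤ ‖x‖ := by
  rw [padic_dvd_iff_norm_le, PadicInt.norm_le_pow_iff_norm_lt_pow_add_one] at h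
  push_neg at h
  have e : (-(((k + 1) : ℕ) : ℤ) + 1) = -(k : ℤ) := by push_cast; ring
  rwa [e] at h

/-- Let `g ∈ 𝔰𝔩₂(ℤ_ℓ)`, `w ∈ ℤ_ℓ²` with minimal coordinate valuation `β`, and
suppose `g·w ≡ λ·w (mod ℓ^n)`.  Then either the characteristic polynomial of `g`
has a root `ν ∈ ℤ_ℓ` with `v(ν - λ) ≥ v(λ) + 3`, or `β ≥ n - 2(2 + v(λ))`. -/
theorem approx_eigenvector_dichotomy (p : ℕ) [Fact p.Prime] (n : ℕ)
    (g : Matrix (Fin 2) (Fin 2) ℤ_[p]) (hg : Matrix.trace g = 0)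
    (w : Fin 2 → ℤ_[p]) (lam : ℤ_[p])
    (β : ℕ) (hβ₁ : ∀ i, (p : ℤ_[p]) ^ β ∣ w i) (hβ₂ : ∃ i, ¬ ((p : ℤ_[p]) ^ (β + 1) ∣ w i))
    (vlam : ℕ) (hv₁ : (p : ℤ_[p]) ^ vlam ∣ lam) (hv₂ : ¬ ((p : ℤ_[p]) ^ (vlam + 1) ∣ lam))
    (hcong : ∀ i, (p : ℤ_[p]) ^ n ∣ (g.mulVec w - lam • w) i) :
    (∃ ν : ℤ_[p], g.charpoly.eval ν = 0 ∧ (p : ℤ_[p]) ^ (vlam + 3) ∣ (ν - lam)) ∨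
      (β : ℤ) ≥ (n : ℤ) - 2 * (2 + (vlam : ℤ)) := by
  by_cases hcase : (β : ℤ) ≥ (n : ℤ) - 2 * (2 + (vlam : ℤ))
  · exact Or.inr hcase
  left
  have hprime : p.Prime := Fact.out
  have hp2 : 2 ≤ p := hprime.two_le
  have hp1R : (1 : ℝ) < p := by exact_mod_cast hprime.one_lt
  have hp0R : (0 : ℝ) < p := by linarith
  -- trace condition
  have htr : g 1 1 = -(g 0 0) := by
    have := hg
    rw [Matrix.trace_fin_two] at this
    linear_combination this
  set D : ℤ_[p] := -(g.det) with hDdef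
  have hD : D = g 0 0 * g 0 0 + g 0 1 * g 1 0 := by
    rw [hDdef, Matrix.det_fin_two, htr]; ring
  -- key divisibility : p^n ∣ (D - lam^2) * w i
  have he : ∀ i, (p : ℤ_[p]) ^ n ∣ (g.mulVec w i - lam * w i) := by
    intro i
    simpa using hcong i
  have hkey : ∀ i, (p : ℤ_[p]) ^ n ∣ (D - lam * lam) * w i := by
    intro i
    fin_cases i
    · have hid : (D - lam * lam) * w 0 =
          (g 0 0 + lam) * (g.mulVec w 0 - lam * w 0) + g 0 1 * (g.mulVec w 1 - lam * w 1) := by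
        simp only [Matrix.mulVec, dotProduct, Fin.sum_univ_two, hD, htr]
        ring
      show (p : ℤ_[p]) ^ n ∣ (D - lam * lam) * w 0
      rw [hid]
      exact dvd_add ((he 0).mul_left _) ((he 1).mul_left _)
    · have hid : (D - lam * lam) * w 1 =
          g 1 0 * (g.mulVec w 0 - lam * w 0) + (g 1 1 + lam) * (g.mulVec w 1 - lam * w 1) := by
        simp only [Matrix.mulVec, dotProduct, Fin.sum_univ_two, hD, htr]
        ring
      show (p : ℤ_[p]) ^ n ∣ (D - lam * lam) * w 1
      rw [hid]
      exact dvd_add ((he 0).mul_left _) ((he 1).mul_left _)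
  -- extract the coordinate of exact valuation β
  obtain ⟨i₀, hi₀⟩ := hβ₂
  obtain ⟨u, hu⟩ := hβ₁ i₀
  have hu_unit : IsUnit u := by
    rw [PadicInt.isUnit_iff]
    have hle : ‖u‖ ≤ 1 := PadicInt.norm_le_one u
    rcases lt_or_eq_of_le hle with hlt | heq
    · exfalso
      rw [PadicInt.norm_lt_one_iff_dvd] at hlt
      obtain ⟨c, hc⟩ := hlt
      exact hi₀ ⟨c, by rw [hu, hc, pow_succ]; ring⟩
    · exact heq
  have hwD : (p : ℤ_[p]) ^ n ∣ (D - lam * lam) * (p : ℤ_[p]) ^ β := by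
    have := hkey i₀
    rw [hu, ← mul_assoc] at this
    exact (hu_unit.dvd_mul_right).mp this
  -- from the failure of the β bound : β + (2*vlam + 5) ≤ n
  have hβn : β + (2 * vlam + 5) ≤ n := by omega
  have hpow_dvd : (p : ℤ_[p]) ^ (2 * vlam + 5) ∣ (D - lam * lam) := by
    have hPne : (p : ℤ_[p]) ≠ 0 := by
      exact_mod_cast Nat.cast_ne_zero.mpr hprime.ne_zero
    have hPbne : (p : ℤ_[p]) ^ β ≠ 0 := pow_ne_zero _ hPne
    have h1 : (p : ℤ_[p]) ^ (β + (2 * vlam + 5)) ∣ (D - lam * lam) * (p : ℤ_[p]) ^ β :=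
      dvd_trans (pow_dvd_pow _ hβn) hwD
    rw [pow_add, mul_comm ((D - lam*lam)) ((p : ℤ_[p])^β)] at h1
    exact (mul_dvd_mul_iff_left hPbne).mp h1
  -- norm bounds
  have hnormD : ‖D - lam * lam‖ ≤ (p : ℝ) ^ (-((2 * vlam + 5 : ℕ) : ℤ)) :=
    (padic_dvd_iff_norm_le _ _).mp hpow_dvd
  have hlam_lb : (p : ℝ) ^ (-(vlam : ℤ)) ≤ ‖lam‖ := padic_not_dvd_norm_ge _ _ hv₂
  have h2_lb : (p : ℝ) ^ (-1 : ℤ) ≤ ‖(2 : ℤ_[p])‖ := by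
    have h2d : ¬ ((p : ℤ_[p]) ^ 2 ∣ (2 : ℤ_[p])) := by
      intro hdvd
      have : ((p : ℤ) ^ 2 ∣ (2 : ℤ)) := by
        rw [← PadicInt.norm_int_le_pow_iff_dvd]
        push_cast
        exact (padic_dvd_iff_norm_le 2 (2 : ℤ_[p])).mp hdvd
      have hle := Int.le_of_dvd (by norm_num) this
      have : (4 : ℤ) ≤ p ^ 2 := by nlinarith [hp2]
      omega
    have := padic_not_dvd_norm_ge 1 (2 : ℤ_[p]) h2d
    simpa using this
  have h2lam_lb : (p : ℝ) ^ (-((vlam : ℤ) + 1)) ≤ ‖2 * lam‖ := by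
    rw [norm_mul]
    calc (p : ℝ) ^ (-((vlam : ℤ) + 1)) = (p : ℝ) ^ (-1 : ℤ) * (p : ℝ) ^ (-(vlam : ℤ)) := by
          rw [← zpow_add₀ (ne_of_gt hp0R)]; ring_nf
      _ ≤ ‖(2 : ℤ_[p])‖ * ‖lam‖ := by
          apply mul_le_mul h2_lb hlam_lb (le_of_lt (zpow_pos hp0R _)) (norm_nonneg _)
  -- Hensel's lemma for F = X^2 - C D at a = lam
  set F : Polynomial ℤ_[p] := Polynomial.X ^ 2 - Polynomial.C D with hFdef
  have hFeval : ∀ x : ℤ_[p], F.eval x = x * x - D := by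
    intro x
    simp only [hFdef, Polynomial.eval_sub, Polynomial.eval_pow, Polynomial.eval_X,
      Polynomial.eval_C]
    ring
  have hFder : ∀ x : ℤ_[p], F.derivative.eval x = 2 * x := by
    intro x; simp [hFdef]; norm_num
  have hlam_pos : (0:ℝ) < ‖lam‖ := lt_of_lt_of_le (zpow_pos hp0R _) hlam_lb
  have h2lam_pos : (0:ℝ) < ‖2 * lam‖ := lt_of_lt_of_le (zpow_pos hp0R _) h2lam_lb
  have hhensel : ‖F.eval lam‖ < ‖F.derivative.eval lam‖ ^ 2 := by
    rw [hFeval, hFder]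
    have h1 : ‖lam * lam - D‖ = ‖D - lam * lam‖ := by
      rw [← norm_neg]; ring_nf
    calc ‖lam * lam - D‖ ≤ (p : ℝ) ^ (-((2 * vlam + 5 : ℕ) : ℤ)) := by rw [h1]; exact hnormD
      _ < (p : ℝ) ^ ((-((vlam : ℤ) + 1)) * 2) := by
          apply zpow_lt_zpow_right₀ hp1R
          push_cast; omega
      _ = ((p : ℝ) ^ (-((vlam : ℤ) + 1))) ^ 2 := by
          rw [← zpow_natCast ((p:ℝ) ^ (-((vlam : ℤ) + 1))), ← zpow_mul]
          norm_num
      _ ≤ ‖2 * lam‖ ^ 2 := by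
          apply pow_le_pow_left₀ (le_of_lt (zpow_pos hp0R _)) h2lam_lb
  obtain ⟨z, hz_root, hz_close, -, -⟩ := hensels_lemma hhensel
  rw [Polynomial.coe_aeval_eq_eval, hFder] at hz_close
  have hzz : z * z = D := by
    have h := hz_root
    rw [Polynomial.coe_aeval_eq_eval, hFeval] at h
    exact sub_eq_zero.mp h
  have hsum : ‖z + lam‖ = ‖2 * lam‖ := by
    have hne : ‖z - lam‖ ≠ ‖2 * lam‖ := ne_of_lt hz_close
    have hrw : z + lam = (z - lam) + 2 * lam := by ring
    rw [hrw, PadicInt.norm_add_eq_max_of_ne hne, max_eq_right (le_of_lt hz_close)]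
  have hmul : ‖z - lam‖ * ‖z + lam‖ ≤ (p : ℝ) ^ (-((2 * vlam + 5 : ℕ) : ℤ)) := by
    rw [← norm_mul]
    have hrw : (z - lam) * (z + lam) = D - lam * lam := by rw [← hzz]; ring
    rw [hrw]
    exact hnormD
  have hfinal : ‖z - lam‖ ≤ (p : ℝ) ^ (-((vlam + 4 : ℕ) : ℤ)) := by
    by_contra hcon
    push_neg at hcon
    have h1 : (p : ℝ) ^ (-((vlam + 4 : ℕ) : ℤ)) * (p : ℝ) ^ (-((vlam : ℤ) + 1)) <
        ‖z - lam‖ * ‖z + lam‖ :=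
      mul_lt_mul hcon (hsum ▸ h2lam_lb) (zpow_pos hp0R _) (norm_nonneg _)
    have h2 : (p : ℝ) ^ (-((2 * vlam + 5 : ℕ) : ℤ)) =
        (p : ℝ) ^ (-((vlam + 4 : ℕ) : ℤ)) * (p : ℝ) ^ (-((vlam : ℤ) + 1)) := by
      rw [← zpow_add₀ (ne_of_gt hp0R)]
      congr 1
      push_cast
      ring
    rw [h2] at hmul
    linarith
  have hdvd4 : (p : ℤ_[p]) ^ (vlam + 4) ∣ z - lam := (padic_dvd_iff_norm_le _ _).mpr hfinal
  have hdvd3 : (p : ℤ_[p]) ^ (vlam + 3) ∣ z - lam :=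
    dvd_trans (pow_dvd_pow _ (by omega)) hdvd4
  refine ⟨z, ?_, hdvd3⟩
  have hcp : g.charpoly = Polynomial.X ^ 2 - Polynomial.C (g 0 0 + g 1 1) * Polynomial.X +
      Polynomial.C (g 0 0 * g 1 1 - g 0 1 * g 1 0) := by
    rw [Matrix.charpoly, Matrix.det_fin_two, Matrix.charmatrix_apply_eq,
      Matrix.charmatrix_apply_eq, Matrix.charmatrix_apply_ne _ _ _ (by decide),
      Matrix.charmatrix_apply_ne _ _ _ (by decide)]
    simp only [map_add, map_mul, map_sub]
    ring
  rw [hcp]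
  simp only [Polynomial.eval_add, Polynomial.eval_sub, Polynomial.eval_mul, Polynomial.eval_pow,
    Polynomial.eval_X, Polynomial.eval_C]
  linear_combination hzz + hD + (g 0 0 - z) * htr
end

section
/- Let ℓ be a prime, k ≥ 1, n ≥ 0, and let b₁,…,b_k, y₁,…,y_k ∈ ℤ_ℓ^k. Suppose each y_i ≡ 0 (mod ℓ^{n+1}) and the ℤ_ℓ-submodule of ℤ_ℓ^k generated by b₁,…,b_k, y₁,…,y_k contains ℓ^n ℤ_ℓ^k. Then the submodule generated by b₁,…,b_k alone contains ℓ^n ℤ_ℓ^k. -/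
/-- If `y₁, …, y_k ≡ 0 (mod ℓ^{n+1})` and the `ℤ_ℓ`-submodule generated by
`b₁, …, b_k, y₁, …, y_k` contains `ℓ^n ℤ_ℓ^k`, then the submodule generated by
`b₁, …, b_k` alone contains `ℓ^n ℤ_ℓ^k`. -/
theorem span_b_contains_pow_smul (p : ℕ) [Fact p.Prime] (k n : ℕ) (hk : 1 ≤ k)
    (b y : Fin k → (Fin k → ℤ_[p]))
    (hy : ∀ i j, (p : ℤ_[p]) ^ (n + 1) ∣ y i j)
    (hspan : ∀ x : Fin k → ℤ_[p], (∀ i, (p : ℤ_[p]) ^ n ∣ x i) →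
      x ∈ Submodule.span ℤ_[p] (Set.range b ∪ Set.range y)) :
    ∀ x : Fin k → ℤ_[p], (∀ i, (p : ℤ_[p]) ^ n ∣ x i) →
      x ∈ Submodule.span ℤ_[p] (Set.range b) := by
  classical
  set M := Submodule.span ℤ_[p] (Set.range b) with hM
  set N := Submodule.span ℤ_[p]
    (Set.range fun j : Fin k => ((p : ℤ_[p]) ^ n) • (Pi.single j 1 : Fin k → ℤ_[p])) with hN
  have hmemN : ∀ x : Fin k → ℤ_[p], (∀ i, (p : ℤ_[p]) ^ n ∣ x i) → x ∈ N := by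
    intro x hx
    choose c hc using hx
    have : x = ∑ j : Fin k, c j • ((p : ℤ_[p]) ^ n • (Pi.single j 1 : Fin k → ℤ_[p])) := by
      funext i
      simp only [Finset.sum_apply, Pi.smul_apply, smul_eq_mul]
      rw [Finset.sum_eq_single i]
      · simp [hc i, mul_comm]
      · intro j _ hj; simp [Pi.single_apply, hj]
      · simp
    rw [this]
    exact Submodule.sum_mem _ fun j _ =>
      Submodule.smul_mem _ _ (Submodule.subset_span ⟨j, rfl⟩)
  have hNdvd : ∀ x ∈ N, ∀ i, (p : ℤ_[p]) ^ n ∣ x i := by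
    intro x hx
    have : N ≤ Submodule.comap
        (LinearMap.pi fun i : Fin k => LinearMap.proj (R := ℤ_[p]) (φ := fun _ : Fin k => ℤ_[p]) i)
        (Submodule.pi Set.univ fun _ : Fin k =>
          Ideal.span {(p : ℤ_[p]) ^ n}) := by
      rw [hN, Submodule.span_le]
      rintro _ ⟨j, rfl⟩
      intro i _
      simp only [LinearMap.pi_apply, LinearMap.proj_apply, Pi.smul_apply, smul_eq_mul,
        Pi.single_apply]
      exact Ideal.mem_span_singleton.2 ⟨if j = i then 1 else 0, by rcases eq_or_ne j i with h | h <;> subst_eqs <;> simp_all [eq_comm]⟩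
    intro i
    exact Ideal.mem_span_singleton.1 (this hx i (Set.mem_univ i))
  have hIjac : Ideal.span {(p : ℤ_[p])} ≤ Ideal.jacobson ⊥ := by
    rw [IsLocalRing.jacobson_eq_maximalIdeal ⊥ bot_ne_top, Ideal.span_le,
      Set.singleton_subset_iff]
    exact PadicInt.p_nonunit
  have hNfg : N.FG := Submodule.fg_span (Set.finite_range _)
  have key : N ≤ M ⊔ (Ideal.span {(p : ℤ_[p])}) • N := by
    intro x hx
    have hx' := hspan x (hNdvd x hx)
    rw [Submodule.span_union] at hx'
    refine (sup_le_sup_left ?_ M : M ⊔ Submodule.span ℤ_[p] (Set.range y) ≤ _) hx'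
    rw [Submodule.span_le]
    rintro _ ⟨i, rfl⟩
    choose c hc using hy i
    have hz : (fun j => (p : ℤ_[p]) ^ n * c j) ∈ N :=
      hmemN _ fun j => ⟨c j, rfl⟩
    have : y i = (p : ℤ_[p]) • fun j => (p : ℤ_[p]) ^ n * c j := by
      funext j
      simp only [Pi.smul_apply, smul_eq_mul, hc j, pow_succ]
      ring
    rw [this]
    exact Submodule.smul_mem_smul (Ideal.mem_span_singleton_self _) hz
  have hfinal : N ≤ M :=
    Submodule.le_of_le_smul_of_le_jacobson_bot hNfg hIjac key
  intro x hx
  exact hfinal (hmemN x hx)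
end

section
/- Let ℓ be a prime, k ≥ 1, n ≥ 0, and b₁,…,b_k, y₁,…,y_k ∈ ℤ_ℓ^k with each y_i ≡ 0 (mod ℓ^{n+1}) and such that the submodule generated by all of b₁,…,b_k, y₁,…,y_k contains ℓ^n ℤ_ℓ^k. Then, with e₁,…,e_k the standard basis of ℤ_ℓ^k, there exists a ℤ_ℓ-linear endomorphism T of ℤ_ℓ^k with T(b_i) = ℓ^n e_i for all i = 1,…,k. -/
/-- Under the hypotheses of the previous lemma, there moreover exists a
`ℤ_ℓ`-linear endomorphism `T` of `ℤ_ℓ^k` with `T(bᵢ) = ℓ^n eᵢ` for all `i`,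
where `e₁, …, e_k` is the standard basis. -/
theorem exists_endomorphism_sending_b_to_scaled_basis (p : ℕ) [Fact p.Prime]
    (k n : ℕ) (hk : 1 ≤ k)
    (b y : Fin k → (Fin k → ℤ_[p]))
    (hy : ∀ i j, (p : ℤ_[p]) ^ (n + 1) ∣ y i j)
    (hspan : ∀ x : Fin k → ℤ_[p], (∀ i, (p : ℤ_[p]) ^ n ∣ x i) →
      x ∈ Submodule.span ℤ_[p] (Set.range b ∪ Set.range y)) :
    ∃ T : (Fin k → ℤ_[p]) →ₗ[ℤ_[p]] (Fin k → ℤ_[p]),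
      ∀ i, T (b i) = (p : ℤ_[p]) ^ n • (Pi.single i (1 : ℤ_[p]) : Fin k → ℤ_[p]) := by
  classical
  -- coefficients
  have hmem : ∀ j : Fin k, ∃ c d : Fin k → ℤ_[p],
      ∀ r, (∑ i, c i * b i r) + (∑ i, d i * y i r)
        = (p : ℤ_[p]) ^ n * (Pi.single j (1:ℤ_[p]) : Fin k → ℤ_[p]) r := by
    intro j
    have h := hspan ((p : ℤ_[p]) ^ n • (Pi.single j 1 : Fin k → ℤ_[p])) (by
      intro i
      exact ⟨(Pi.single j (1:ℤ_[p]) : Fin k → ℤ_[p]) i, by simp [Pi.smul_apply]⟩)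
    rw [Submodule.span_union, Submodule.mem_sup] at h
    obtain ⟨u, hu, v, hv, huv⟩ := h
    rw [Submodule.mem_span_range_iff_exists_fun] at hu hv
    obtain ⟨c, hc⟩ := hu
    obtain ⟨d, hd⟩ := hv
    refine ⟨c, d, fun r => ?_⟩
    have := congrFun huv r
    rw [← hc, ← hd] at this
    simpa [Finset.sum_apply, Pi.smul_apply, smul_eq_mul] using this
  choose C D hCD using hmem
  choose w hw using fun i j => hy i j
  -- matrices
  set B : Matrix (Fin k) (Fin k) ℤ_[p] := fun r i => b i r with hB
  set Cm : Matrix (Fin k) (Fin k) ℤ_[p] := fun i j => C j i with hCm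
  set Dm : Matrix (Fin k) (Fin k) ℤ_[p] := fun i j => D j i with hDm
  set Wm : Matrix (Fin k) (Fin k) ℤ_[p] := fun r i => w i r with hWm
  set M : Matrix (Fin k) (Fin k) ℤ_[p] := Wm * Dm with hM
  have key : B * Cm = (p : ℤ_[p]) ^ n • ((1 : Matrix (Fin k) (Fin k) ℤ_[p])
      - (p : ℤ_[p]) • M) := by
    ext r j
    have h := hCD j r
    simp only [Matrix.mul_apply, Matrix.smul_apply, Matrix.sub_apply, Matrix.one_apply,
      smul_eq_mul, hM]
    simp only [hB, hCm, hDm, hWm]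
    have h2 : (∑ i, D j i * y i r) = (p:ℤ_[p])^(n+1) * ∑ i, w i r * D j i := by
      rw [Finset.mul_sum]
      refine Finset.sum_congr rfl fun i _ => ?_
      rw [hw i r]; ring
    have h3 : (∑ i, b i r * C j i) = ∑ i, C j i * b i r :=
      Finset.sum_congr rfl fun i _ => mul_comm _ _
    have hsingle : (Pi.single j (1:ℤ_[p]) : Fin k → ℤ_[p]) r
        = if r = j then 1 else 0 := by
      rcases eq_or_ne r j with rfl | hrj
      · simp
      · simp [Pi.single_eq_of_ne hrj, hrj]
    rw [h3, eq_sub_of_add_eq h, h2, hsingle]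
    ring
  -- the matrix 1 - p • M has unit determinant
  have hdet : IsUnit ((1 : Matrix (Fin k) (Fin k) ℤ_[p]) - (p : ℤ_[p]) • M).det := by
    set x := ((1 : Matrix (Fin k) (Fin k) ℤ_[p]) - (p : ℤ_[p]) • M).det with hx
    have hmap : PadicInt.toZMod x = 1 := by
      rw [hx, RingHom.map_det]
      have : ((1 : Matrix (Fin k) (Fin k) ℤ_[p]) - (p : ℤ_[p]) • M).map PadicInt.toZMod
          = 1 := by
        ext i j
        simp [Matrix.map_apply, Matrix.sub_apply, Matrix.smul_apply, Matrix.one_apply,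
          apply_ite PadicInt.toZMod]
      rw [RingHom.mapMatrix_apply, this, Matrix.det_one]
    by_contra hxu
    have hmem' : x ∈ IsLocalRing.maximalIdeal ℤ_[p] := by
      rwa [IsLocalRing.mem_maximalIdeal, mem_nonunits_iff]
    rw [← PadicInt.ker_toZMod, RingHom.mem_ker] at hmem'
    rw [hmem'] at hmap
    exact zero_ne_one hmap
  have hMunit : IsUnit ((1 : Matrix (Fin k) (Fin k) ℤ_[p]) - (p : ℤ_[p]) • M) :=
    (Matrix.isUnit_iff_isUnit_det _).mpr hdet
  obtain ⟨U, hU⟩ := hMunit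
  set A : Matrix (Fin k) (Fin k) ℤ_[p] := Cm * (↑U⁻¹ : Matrix (Fin k) (Fin k) ℤ_[p])
    with hA
  have hBA : B * A = (p : ℤ_[p]) ^ n • (1 : Matrix (Fin k) (Fin k) ℤ_[p]) := by
    rw [hA, ← Matrix.mul_assoc, key, ← hU, Matrix.smul_mul, U.mul_inv]
  -- p^n ≠ 0 in ℤ_[p]
  have hp0 : ((p:ℤ_[p])^n) ≠ 0 := by
    apply pow_ne_zero
    exact_mod_cast (Fact.out : p.Prime).ne_zero
  have hdetB : B.det ≠ 0 := by
    intro h0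
    have hd := congrArg Matrix.det hBA
    rw [Matrix.det_mul, h0, zero_mul, Matrix.det_smul, Matrix.det_one, mul_one] at hd
    exact pow_ne_zero _ hp0 hd.symm
  have hAB : A * B = (p : ℤ_[p]) ^ n • (1 : Matrix (Fin k) (Fin k) ℤ_[p]) := by
    have h5 : B * (A * B - (p:ℤ_[p])^n • 1) = 0 := by
      rw [Matrix.mul_sub, ← Matrix.mul_assoc, hBA, Matrix.smul_mul, Matrix.mul_smul,
        Matrix.one_mul, Matrix.mul_one, sub_self]
    have h6 : B.det • (A * B - (p:ℤ_[p])^n • 1) = 0 := by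
      calc B.det • (A * B - (p:ℤ_[p])^n • 1)
          = (B.det • 1) * (A * B - (p:ℤ_[p])^n • 1) := by
            rw [Matrix.smul_mul, Matrix.one_mul]
        _ = B.adjugate * (B * (A * B - (p:ℤ_[p])^n • 1)) := by
            rw [← Matrix.adjugate_mul, Matrix.mul_assoc]
        _ = 0 := by rw [h5, Matrix.mul_zero]
    have h7 : A * B - (p:ℤ_[p])^n • 1 = 0 := by
      ext i j
      have := congrFun (congrFun h6 i) j
      simp only [Matrix.smul_apply, Matrix.zero_apply, smul_eq_mul] at this ⊢
      rcases mul_eq_zero.mp this with h | h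
      · exact absurd h hdetB
      · exact h
    exact sub_eq_zero.mp h7
  refine ⟨A.mulVecLin, fun i => ?_⟩
  have hb : b i = B.mulVec (Pi.single i 1) := by
    funext r
    rw [Matrix.mulVec_single]
    simp [hB, Matrix.col]
    rfl
  rw [Matrix.mulVecLin_apply, hb, Matrix.mulVec_mulVec, hAB,
    Matrix.smul_mulVec, Matrix.one_mulVec]
end

section
/- Let ℓ be a prime and s a non-negative integer, with s ≥ 2 if ℓ = 2 and s ≥ 1 if ℓ ∈ {3, 5}. Let t ≥ 0 and let W ⊆ 𝔰𝔩₂(ℤ_ℓ) be a Lie subalgebra whose image modulo ℓ^{t+1} is nonzero, and which is stable under conjugation by every element of B_ℓ(s) = {x ∈ SL₂(ℤ_ℓ) : x ≡ Id (mod ℓ^s)}. Then W contains ℓ^{t+4s+4v}·𝔰𝔩₂(ℤ_ℓ), where v = 1 if ℓ = 2 and v = 0 otherwise. -/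
attribute [local instance 100] LieRing.ofAssociativeRing

open Matrix

variable {p : ℕ} [Fact p.Prime]

local notation "M2" => Matrix (Fin 2) (Fin 2) ℤ_[p]

noncomputable def cscEm : M2 := !![0,1;0,0]
noncomputable def cscFm : M2 := !![0,0;1,0]
noncomputable def cscHm : M2 := !![1,0;0,-1]

lemma cscEE : ((cscEm (p := p)) : M2) * (cscEm (p := p)) = 0 := by
  ext i j; fin_cases i <;> fin_cases j <;>
    simp [cscEm, Matrix.mul_apply, Matrix.vecMul, dotProduct, Fin.sum_univ_two]

lemma cscFF : ((cscFm (p := p)) : M2) * (cscFm (p := p)) = 0 := by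
  ext i j; fin_cases i <;> fin_cases j <;>
    simp [cscFm, Matrix.mul_apply, Matrix.vecMul, dotProduct, Fin.sum_univ_two]

lemma cscExE (x : M2) : (cscEm (p := p)) * x * (cscEm (p := p)) = x 1 0 • (cscEm (p := p)) := by
  ext i j; fin_cases i <;> fin_cases j <;>
    simp [cscEm, Matrix.mul_apply, Matrix.vecMul, dotProduct, Fin.sum_univ_two]

lemma cscFxF (x : M2) : (cscFm (p := p)) * x * (cscFm (p := p)) = x 0 1 • (cscFm (p := p)) := by
  ext i j; fin_cases i <;> fin_cases j <;>
    simp [cscFm, Matrix.mul_apply, Matrix.vecMul, dotProduct, Fin.sum_univ_two]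

lemma cscEF_sub : ((cscEm (p := p)) : M2) * (cscFm (p := p)) - (cscFm (p := p)) * (cscEm (p := p)) = (cscHm (p := p)) := by
  ext i j; fin_cases i <;> fin_cases j <;>
    simp [cscEm, cscFm, cscHm, Matrix.mul_apply, Fin.sum_univ_two]

lemma cscFE_sub : ((cscFm (p := p)) : M2) * (cscEm (p := p)) - (cscEm (p := p)) * (cscFm (p := p)) = -(cscHm (p := p)) := by
  rw [← cscEF_sub]; abel

lemma cscEH : ((cscEm (p := p)) : M2) * (cscHm (p := p)) - (cscHm (p := p)) * (cscEm (p := p)) = (-2 : ℤ_[p]) • (cscEm (p := p)) := by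
  ext i j; fin_cases i <;> fin_cases j <;>
    (simp [cscEm, cscHm, Matrix.mul_apply, Fin.sum_univ_two]; try ring)

lemma cscFH : ((cscFm (p := p)) : M2) * (cscHm (p := p)) - (cscHm (p := p)) * (cscFm (p := p)) = (2 : ℤ_[p]) • (cscFm (p := p)) := by
  ext i j; fin_cases i <;> fin_cases j <;>
    (simp [cscFm, cscHm, Matrix.mul_apply, Fin.sum_univ_two]; try ring)

lemma cscBrE01 (x : M2) : ((cscEm (p := p)) * x - x * (cscEm (p := p)) : M2) 0 1 = x 1 1 - x 0 0 := by
  simp [cscEm, Matrix.mul_apply, Matrix.vecMul, dotProduct, Fin.sum_univ_two]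

lemma cscBrF10 (x : M2) : ((cscFm (p := p)) * x - x * (cscFm (p := p)) : M2) 1 0 = x 0 0 - x 1 1 := by
  simp [cscFm, Matrix.mul_apply, Matrix.vecMul, dotProduct, Fin.sum_univ_two]

lemma cscDetE (c : ℤ_[p]) : Matrix.det (1 + c • (cscEm (p := p)) : M2) = 1 := by
  rw [Matrix.det_fin_two]
  simp [cscEm, Matrix.one_apply]

lemma cscDetF (c : ℤ_[p]) : Matrix.det (1 + c • (cscFm (p := p)) : M2) = 1 := by
  rw [Matrix.det_fin_two]
  simp [cscFm, Matrix.one_apply]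

lemma cscDecomp (x : M2) (h11 : x 1 1 = - x 0 0) :
    x = x 0 0 • (cscHm (p := p)) + x 0 1 • (cscEm (p := p)) + x 1 0 • (cscFm (p := p)) := by
  ext i j; fin_cases i <;> fin_cases j <;>
    simp [cscEm, cscFm, cscHm, h11]

lemma cscEntrySubOne (c : ℤ_[p]) (n : M2) (i j : Fin 2) :
    ((1 + c • n) - 1 : M2) i j = c * n i j := by
  simp

lemma cscConjFormula (c : ℤ_[p]) (n x : M2) :
    (1 + c • n) * x * (1 - c • n)
      = x + c • (n * x - x * n) - (c * c) • (n * x * n) := by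
  simp only [mul_add, add_mul, mul_sub, sub_mul, smul_mul_assoc, mul_smul_comm, smul_smul,
    one_mul, mul_one, smul_sub, smul_add]
  abel_nf

lemma cscRightInv (c : ℤ_[p]) (n : M2) (hn : n * n = 0) :
    (1 + c • n) * (1 - c • n) = 1 := by
  simp only [mul_sub, add_mul, one_mul, mul_one, smul_mul_assoc, mul_smul_comm, smul_smul, hn,
    smul_zero, add_zero]
  abel

lemma cscDvdPow (u : ℤ_[p]) (t : ℕ) (hu : ¬ ((p:ℤ_[p])^(t+1) ∣ u)) : u ∣ (p:ℤ_[p])^t := by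
  have hu0 : u ≠ 0 := by rintro rfl; exact hu (dvd_zero _)
  obtain ⟨n, e, rfl⟩ :=
    IsDiscreteValuationRing.eq_unit_mul_pow_irreducible hu0 PadicInt.irreducible_p
  have hn : n ≤ t := by
    by_contra h
    exact hu ((Units.dvd_mul_left (a := (p:ℤ_[p])^(t+1)) (b := (p:ℤ_[p])^n) (u := e)).mpr
      (pow_dvd_pow _ (by omega)))
  exact (Units.mul_left_dvd (u := e)).mpr (pow_dvd_pow _ hn)

lemma cscKey (s : ℕ) (W : LieSubalgebra ℤ_[p] M2)
    (hWconj : ∀ h : M2, h.det = 1 →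
      (∀ i j, (p : ℤ_[p]) ^ s ∣ (h - 1) i j) →
      ∀ x ∈ W, h * x * h⁻¹ ∈ W)
    (n : M2) (hnn : n * n = 0) (hdet : ∀ c : ℤ_[p], Matrix.det (1 + c • n) = 1)
    (x : M2) (hx : x ∈ W) :
    (2:ℤ_[p]) • ((p:ℤ_[p])^s • (n*x - x*n)) ∈ W ∧
      (2:ℤ_[p]) • (((p:ℤ_[p])^s * (p:ℤ_[p])^s) • (n*x*n)) ∈ W := by
  set c : ℤ_[p] := (p:ℤ_[p])^s with hc
  have hinv : ∀ d : ℤ_[p], (1 + d • n)⁻¹ = 1 - d • n :=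
    fun d => Matrix.inv_eq_right_inv (cscRightInv d n hnn)
  have hdvd : ∀ d : ℤ_[p], c ∣ d → ∀ i j, c ∣ ((1 + d • n) - 1) i j := by
    intro d hd i j
    rw [cscEntrySubOne]
    exact hd.mul_right _
  have m1 := hWconj (1 + c • n) (hdet c) (hdvd c dvd_rfl) x hx
  have m2 := hWconj (1 + (-c) • n) (hdet (-c)) (hdvd (-c) (dvd_neg.mpr dvd_rfl)) x hx
  rw [hinv, cscConjFormula] at m1 m2
  constructor
  · have hsub := W.sub_mem m1 m2
    have heq : (x + c • (n*x - x*n) - (c*c) • (n*x*n))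
        - (x + (-c) • (n*x - x*n) - ((-c)*(-c)) • (n*x*n))
        = (2:ℤ_[p]) • (c • (n*x - x*n)) := by module
    rwa [heq] at hsub
  · have h3 := W.sub_mem (W.add_mem m1 m2) (W.smul_mem (2:ℤ_[p]) hx)
    have h4 := W.neg_mem h3
    have heq : -((x + c • (n*x - x*n) - (c*c) • (n*x*n))
        + (x + (-c) • (n*x - x*n) - ((-c)*(-c)) • (n*x*n)) - (2:ℤ_[p]) • x)
        = (2:ℤ_[p]) • ((c*c) • (n*x*n)) := by module
    rwa [heq] at h4
/-- A Lie subalgebra `W ⊆ 𝔰𝔩₂(ℤ_ℓ)` which is nonzero modulo `ℓ^{t+1}` and stable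
under conjugation by the principal congruence subgroup `B_ℓ(s)` (with `s ≥ 2`
if `ℓ = 2` and `s ≥ 1` if `ℓ ∈ {3,5}`) contains `ℓ^{t+4s+4v}·𝔰𝔩₂(ℤ_ℓ)`, where
`v = 1` if `ℓ = 2` and `v = 0` otherwise. -/
theorem conj_stable_subalgebra_contains (p : ℕ) [Fact p.Prime] (s t : ℕ)
    (hs2 : p = 2 → 2 ≤ s) (hs35 : p = 3 ∨ p = 5 → 1 ≤ s)
    (W : LieSubalgebra ℤ_[p] (Matrix (Fin 2) (Fin 2) ℤ_[p]))
    (hWsl : ∀ x ∈ W, Matrix.trace x = 0)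
    (hWnz : ∃ x ∈ W, ∃ i j, ¬ ((p : ℤ_[p]) ^ (t + 1) ∣ x i j))
    (hWconj : ∀ h : Matrix (Fin 2) (Fin 2) ℤ_[p], h.det = 1 →
      (∀ i j, (p : ℤ_[p]) ^ s ∣ (h - 1) i j) →
      ∀ x ∈ W, h * x * h⁻¹ ∈ W) :
    ∀ x : Matrix (Fin 2) (Fin 2) ℤ_[p], Matrix.trace x = 0 →
      (p : ℤ_[p]) ^ (t + 4 * s + 4 * (if p = 2 then 1 else 0)) • x ∈ W := by
  intro x hx
  set v : ℕ := if p = 2 then 1 else 0 with hv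
  -- `half`: dividing by 2 costs a factor p^v
  have half : ∀ z : Matrix (Fin 2) (Fin 2) ℤ_[p],
      (2:ℤ_[p]) • z ∈ W → (p:ℤ_[p])^v • z ∈ W := by
    intro z hz
    by_cases hp2 : p = 2
    · have hv1 : v = 1 := by simp [hv, hp2]
      have hpc : ((p:ℤ_[p])) = (2:ℤ_[p]) := by simp [hp2]
      rw [hv1, pow_one, hpc]
      exact hz
    · have hv0 : v = 0 := by simp [hv, hp2]
      rw [hv0, pow_zero, one_smul]
      have hunit : IsUnit (2:ℤ_[p]) := by
        rw [PadicInt.isUnit_iff]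
        have h1 : ‖(2:ℤ_[p])‖ ≤ 1 := PadicInt.norm_le_one _
        have h2 : ¬ ‖(2:ℤ_[p])‖ < 1 := by
          rw [PadicInt.norm_lt_one_iff_dvd]
          intro hdvd
          have h3 : ((p:ℤ_[p]))^1 ∣ ((2:ℤ):ℤ_[p]) := by simpa using hdvd
          have h4 : ((p:ℤ))^1 ∣ (2:ℤ) := (PadicInt.pow_p_dvd_int_iff 1 2).mp h3
          have h5 : (p:ℤ) ∣ 2 := by simpa using h4
          have h6 : p ∣ 2 := by exact_mod_cast h5
          exact hp2 ((Nat.prime_dvd_prime_iff_eq (Fact.out) Nat.prime_two).mp h6)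
        linarith
      obtain ⟨un, hun⟩ := hunit
      have h2' := W.smul_mem ((un⁻¹ : ℤ_[p]ˣ) : ℤ_[p]) hz
      rw [smul_smul] at h2'
      have he : ((un⁻¹ : ℤ_[p]ˣ) : ℤ_[p]) * 2 = 1 := by rw [← hun]; exact un.inv_mul
      rwa [he, one_smul] at h2'
  have halfpow : ∀ (m : ℕ) (z : Matrix (Fin 2) (Fin 2) ℤ_[p]),
      (2:ℤ_[p]) • ((p:ℤ_[p])^m • z) ∈ W → (p:ℤ_[p])^(m+v) • z ∈ W := by
    intro m z h
    have h1 := half _ h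
    have e : (p:ℤ_[p])^v • ((p:ℤ_[p])^m • z) = (p:ℤ_[p])^(m+v) • z := by
      rw [smul_smul, ← pow_add, add_comm]
    rwa [e] at h1
  have mono : ∀ (m n : ℕ) (z : Matrix (Fin 2) (Fin 2) ℤ_[p]), m ≤ n →
      (p:ℤ_[p])^m • z ∈ W → (p:ℤ_[p])^n • z ∈ W := by
    intro m n z hmn h
    have e : (p:ℤ_[p])^n • z = (p:ℤ_[p])^(n-m) • ((p:ℤ_[p])^m • z) := by
      rw [smul_smul, ← pow_add, Nat.sub_add_cancel hmn]
    rw [e]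
    exact W.smul_mem _ h
  -- the four basic relations
  have R1 : ∀ y ∈ W, (p:ℤ_[p])^(s+v) • ((cscEm (p := p)) * y - y * (cscEm (p := p))) ∈ W := by
    intro y hy
    exact halfpow s _ (cscKey s W hWconj (cscEm (p := p)) cscEE cscDetE y hy).1
  have R3 : ∀ y ∈ W, (p:ℤ_[p])^(s+v) • ((cscFm (p := p)) * y - y * (cscFm (p := p))) ∈ W := by
    intro y hy
    exact halfpow s _ (cscKey s W hWconj (cscFm (p := p)) cscFF cscDetF y hy).1
  have R2 : ∀ y ∈ W, (p:ℤ_[p])^(2*s+v) • (y 1 0 • (cscEm (p := p))) ∈ W := by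
    intro y hy
    have h0 := (cscKey s W hWconj (cscEm (p := p)) cscEE cscDetE y hy).2
    have e : (2:ℤ_[p]) • (((p:ℤ_[p])^s * (p:ℤ_[p])^s) • ((cscEm (p := p)) * y * (cscEm (p := p))))
        = (2:ℤ_[p]) • ((p:ℤ_[p])^(2*s) • (y 1 0 • (cscEm (p := p)))) := by
      rw [cscExE]; module
    rw [e] at h0
    exact halfpow _ _ h0
  have R4 : ∀ y ∈ W, (p:ℤ_[p])^(2*s+v) • (y 0 1 • (cscFm (p := p))) ∈ W := by
    intro y hy
    have h0 := (cscKey s W hWconj (cscFm (p := p)) cscFF cscDetF y hy).2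
    have e : (2:ℤ_[p]) • (((p:ℤ_[p])^s * (p:ℤ_[p])^s) • ((cscFm (p := p)) * y * (cscFm (p := p))))
        = (2:ℤ_[p]) • ((p:ℤ_[p])^(2*s) • (y 0 1 • (cscFm (p := p)))) := by
      rw [cscFxF]; module
    rw [e] at h0
    exact halfpow _ _ h0
  -- the witness
  obtain ⟨w, hw, i, j, hnd⟩ := hWnz
  have htr : w 1 1 = - w 0 0 := by
    have h := hWsl w hw
    rw [Matrix.trace_fin_two] at h
    linear_combination h
  -- membership of w in W gives the chain
  have hc0E : (p:ℤ_[p])^(2*s+v) • (w 1 0 • (cscEm (p := p))) ∈ W := R2 w hw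
  have hbF : (p:ℤ_[p])^(2*s+v) • (w 0 1 • (cscFm (p := p))) ∈ W := R4 w hw
  have hA : (p:ℤ_[p])^(s+v) • ((cscEm (p := p)) * w - w * (cscEm (p := p))) ∈ W := R1 w hw
  have hB : (p:ℤ_[p])^(s+v) • ((cscFm (p := p)) * w - w * (cscFm (p := p))) ∈ W := R3 w hw
  -- a • Fm at exponent 3s+3v
  have haF : (p:ℤ_[p])^(3*s+2*v+v) • (w 0 0 • (cscFm (p := p))) ∈ W := by
    apply halfpow
    have h4 := R4 _ hA
    have e : (p:ℤ_[p])^(2*s+v) •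
        (((p:ℤ_[p])^(s+v) • ((cscEm (p := p)) * w - w * (cscEm (p := p))) : Matrix (Fin 2) (Fin 2) ℤ_[p]) 0 1 • (cscFm (p := p)))
        = -((2:ℤ_[p]) • ((p:ℤ_[p])^(3*s+2*v) • (w 0 0 • (cscFm (p := p))))) := by
      rw [Matrix.smul_apply, cscBrE01, htr, smul_eq_mul]
      module
    rw [e] at h4
    simpa using W.neg_mem h4
  -- a • Em at exponent 3s+3v
  have haE : (p:ℤ_[p])^(3*s+2*v+v) • (w 0 0 • (cscEm (p := p))) ∈ W := by
    apply halfpow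
    have h4 := R2 _ hB
    have e : (p:ℤ_[p])^(2*s+v) •
        (((p:ℤ_[p])^(s+v) • ((cscFm (p := p)) * w - w * (cscFm (p := p))) : Matrix (Fin 2) (Fin 2) ℤ_[p]) 1 0 • (cscEm (p := p)))
        = (2:ℤ_[p]) • ((p:ℤ_[p])^(3*s+2*v) • (w 0 0 • (cscEm (p := p)))) := by
      rw [Matrix.smul_apply, cscBrF10, htr, smul_eq_mul]
      module
    rwa [e] at h4
  -- b • Hm at exponent 3s+2v
  have hbH : (p:ℤ_[p])^(3*s+2*v) • (w 0 1 • (cscHm (p := p))) ∈ W := by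
    have h := R1 _ hbF
    have hbil : (cscEm (p := p)) * ((p:ℤ_[p])^(2*s+v) • (w 0 1 • (cscFm (p := p))))
        - ((p:ℤ_[p])^(2*s+v) • (w 0 1 • (cscFm (p := p)))) * (cscEm (p := p))
        = (p:ℤ_[p])^(2*s+v) • (w 0 1 • ((cscEm (p := p)) * (cscFm (p := p)) - (cscFm (p := p)) * (cscEm (p := p)))) := by
      simp [mul_smul_comm, smul_mul_assoc, smul_sub]
    rw [hbil, cscEF_sub] at h
    have e : (p:ℤ_[p])^(s+v) • ((p:ℤ_[p])^(2*s+v) • (w 0 1 • (cscHm (p := p))))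
        = (p:ℤ_[p])^(3*s+2*v) • (w 0 1 • (cscHm (p := p))) := by module
    rwa [e] at h
  -- c • Hm at exponent 3s+2v
  have hcH : (p:ℤ_[p])^(3*s+2*v) • (w 1 0 • (cscHm (p := p))) ∈ W := by
    have h := R3 _ hc0E
    have hbil : (cscFm (p := p)) * ((p:ℤ_[p])^(2*s+v) • (w 1 0 • (cscEm (p := p))))
        - ((p:ℤ_[p])^(2*s+v) • (w 1 0 • (cscEm (p := p)))) * (cscFm (p := p))
        = (p:ℤ_[p])^(2*s+v) • (w 1 0 • ((cscFm (p := p)) * (cscEm (p := p)) - (cscEm (p := p)) * (cscFm (p := p)))) := by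
      simp [mul_smul_comm, smul_mul_assoc, smul_sub]
    rw [hbil, cscFE_sub] at h
    have e : (p:ℤ_[p])^(s+v) • ((p:ℤ_[p])^(2*s+v) • (w 1 0 • (-(cscHm (p := p)))))
        = -((p:ℤ_[p])^(3*s+2*v) • (w 1 0 • (cscHm (p := p)))) := by module
    rw [e] at h
    simpa using W.neg_mem h
  -- b • Em at exponent 4s+4v
  have hbE : (p:ℤ_[p])^(4*s+3*v+v) • (w 0 1 • (cscEm (p := p))) ∈ W := by
    apply halfpow
    have h := R1 _ hbH
    have hbil : (cscEm (p := p)) * ((p:ℤ_[p])^(3*s+2*v) • (w 0 1 • (cscHm (p := p))))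
        - ((p:ℤ_[p])^(3*s+2*v) • (w 0 1 • (cscHm (p := p)))) * (cscEm (p := p))
        = (p:ℤ_[p])^(3*s+2*v) • (w 0 1 • ((cscEm (p := p)) * (cscHm (p := p)) - (cscHm (p := p)) * (cscEm (p := p)))) := by
      simp [mul_smul_comm, smul_mul_assoc, smul_sub]
    rw [hbil, cscEH] at h
    have e : (p:ℤ_[p])^(s+v) • ((p:ℤ_[p])^(3*s+2*v) • (w 0 1 • ((-2:ℤ_[p]) • (cscEm (p := p)))))
        = -((2:ℤ_[p]) • ((p:ℤ_[p])^(4*s+3*v) • (w 0 1 • (cscEm (p := p))))) := by module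
    rw [e] at h
    simpa using W.neg_mem h
  -- c • Fm at exponent 4s+4v
  have hcF : (p:ℤ_[p])^(4*s+3*v+v) • (w 1 0 • (cscFm (p := p))) ∈ W := by
    apply halfpow
    have h := R3 _ hcH
    have hbil : (cscFm (p := p)) * ((p:ℤ_[p])^(3*s+2*v) • (w 1 0 • (cscHm (p := p))))
        - ((p:ℤ_[p])^(3*s+2*v) • (w 1 0 • (cscHm (p := p)))) * (cscFm (p := p))
        = (p:ℤ_[p])^(3*s+2*v) • (w 1 0 • ((cscFm (p := p)) * (cscHm (p := p)) - (cscHm (p := p)) * (cscFm (p := p)))) := by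
      simp [mul_smul_comm, smul_mul_assoc, smul_sub]
    rw [hbil, cscFH] at h
    have e : (p:ℤ_[p])^(s+v) • ((p:ℤ_[p])^(3*s+2*v) • (w 1 0 • ((2:ℤ_[p]) • (cscFm (p := p)))))
        = (2:ℤ_[p]) • ((p:ℤ_[p])^(4*s+3*v) • (w 1 0 • (cscFm (p := p)))) := by module
    rwa [e] at h
  -- a • Hm at exponent 4s+4v
  have haH : (p:ℤ_[p])^(4*s+4*v) • (w 0 0 • (cscHm (p := p))) ∈ W := by
    have h := R3 _ haE
    have hbil : (cscFm (p := p)) * ((p:ℤ_[p])^(3*s+2*v+v) • (w 0 0 • (cscEm (p := p))))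
        - ((p:ℤ_[p])^(3*s+2*v+v) • (w 0 0 • (cscEm (p := p)))) * (cscFm (p := p))
        = (p:ℤ_[p])^(3*s+2*v+v) • (w 0 0 • ((cscFm (p := p)) * (cscEm (p := p)) - (cscEm (p := p)) * (cscFm (p := p)))) := by
      simp [mul_smul_comm, smul_mul_assoc, smul_sub]
    rw [hbil, cscFE_sub] at h
    have e : (p:ℤ_[p])^(s+v) • ((p:ℤ_[p])^(3*s+2*v+v) • (w 0 0 • (-(cscHm (p := p)))))
        = -((p:ℤ_[p])^(4*s+4*v) • (w 0 0 • (cscHm (p := p)))) := by module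
    rw [e] at h
    simpa using W.neg_mem h
  -- collect: all nine at exponent 4s+4v
  have final : ∀ u : ℤ_[p], (u = w 0 0 ∨ u = w 0 1 ∨ u = w 1 0) →
      ∀ X : Matrix (Fin 2) (Fin 2) ℤ_[p], (X = (cscEm (p := p)) ∨ X = (cscFm (p := p)) ∨ X = (cscHm (p := p))) →
      (p:ℤ_[p])^(4*s+4*v) • (u • X) ∈ W := by
    rintro u (rfl | rfl | rfl) X (rfl | rfl | rfl)
    · exact mono _ _ _ (by omega) haE
    · exact mono _ _ _ (by omega) haF
    · exact mono _ _ _ (by omega) haH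
    · exact mono _ _ _ (by omega) hbE
    · exact mono _ _ _ (by omega) hbF
    · exact mono _ _ _ (by omega) hbH
    · exact mono _ _ _ (by omega) hc0E
    · exact mono _ _ _ (by omega) hcF
    · exact mono _ _ _ (by omega) hcH
  -- pick the entry with small valuation
  have hu : ∃ u : ℤ_[p], (u = w 0 0 ∨ u = w 0 1 ∨ u = w 1 0) ∧
      ¬ ((p:ℤ_[p])^(t+1) ∣ u) := by
    fin_cases i <;> fin_cases j
    · exact ⟨w 0 0, Or.inl rfl, hnd⟩
    · exact ⟨w 0 1, Or.inr (Or.inl rfl), hnd⟩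
    · exact ⟨w 1 0, Or.inr (Or.inr rfl), hnd⟩
    · refine ⟨w 0 0, Or.inl rfl, fun hd => hnd ?_⟩
      show (p:ℤ_[p])^(t+1) ∣ w 1 1
      rw [htr]
      exact hd.neg_right
  obtain ⟨u, huor, hund⟩ := hu
  obtain ⟨r, hr⟩ := cscDvdPow u t hund
  have base : ∀ X : Matrix (Fin 2) (Fin 2) ℤ_[p], (X = (cscEm (p := p)) ∨ X = (cscFm (p := p)) ∨ X = (cscHm (p := p))) →
      (p:ℤ_[p])^(t + 4*s + 4*v) • X ∈ W := by
    intro X hX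
    have h1 := W.smul_mem r (final u huor X hX)
    have e : r • ((p:ℤ_[p])^(4*s+4*v) • (u • X)) = (p:ℤ_[p])^(t + 4*s + 4*v) • X := by
      rw [smul_smul, smul_smul]
      congr 1
      conv_rhs => rw [show t + 4*s + 4*v = t + (4*s+4*v) by omega, pow_add, hr]
      ring
    rwa [e] at h1
  -- decompose x
  have h11 : x 1 1 = - x 0 0 := by
    have h := hx
    rw [Matrix.trace_fin_two] at h
    linear_combination h
  rw [cscDecomp x h11, smul_add, smul_add]
  refine W.add_mem (W.add_mem ?_ ?_) ?_
  · have h := W.smul_mem (x 0 0) (base (cscHm (p := p)) (Or.inr (Or.inr rfl)))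
    rwa [smul_comm] at h
  · have h := W.smul_mem (x 0 1) (base (cscEm (p := p)) (Or.inl rfl))
    rwa [smul_comm] at h
  · have h := W.smul_mem (x 1 0) (base (cscFm (p := p)) (Or.inr (Or.inl rfl)))
    rwa [smul_comm] at h
end

section
/- Let n ≥ 2, ℓ a prime, and G a closed subgroup of SL₂(ℤ_ℓ)^n. Let π_i denote the projection of G to the i-th factor. Suppose for every pair i ≠ j there is a non-negative integer s_{ij} (with s_{ij} ≥ 2 if ℓ = 2 and s_{ij} ≥ 1 if ℓ = 3) such that (π_i × π_j)(G) contains B_ℓ(s_{ij}) × B_ℓ(s_{ij}). Then G contains the product over i of B_ℓ(Σ_{j≠i} s_{ij} + (n−2)·v), where v = 1 if ℓ = 2 and v = 0 otherwise. -/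
noncomputable instance SL2Zp.topologicalSpace (p : ℕ) [Fact p.Prime] :
    TopologicalSpace (Matrix.SpecialLinearGroup (Fin 2) ℤ_[p]) :=
  inferInstanceAs (TopologicalSpace {A : Matrix (Fin 2) (Fin 2) ℤ_[p] // A.det = 1})

/-- The principal congruence subgroup `B_ℓ(s) = ker(SL₂(ℤ_ℓ) → SL₂(ℤ/ℓ^s))`,
with `B_ℓ(0) = SL₂(ℤ_ℓ)`. -/
noncomputable def congruenceSubgroup (p : ℕ) [Fact p.Prime] (s : ℕ) :
    Subgroup (Matrix.SpecialLinearGroup (Fin 2) ℤ_[p]) :=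
  (Matrix.SpecialLinearGroup.map (PadicInt.toZModPow s)).ker

open scoped commutatorElement

namespace GR
variable {p : ℕ} [Fact p.Prime]

abbrev SL (p : ℕ) [Fact p.Prime] := Matrix.SpecialLinearGroup (Fin 2) ℤ_[p]

lemma toZModPow_eq_zero_iff (s : ℕ) (x : ℤ_[p]) :
    PadicInt.toZModPow s x = 0 ↔ (p : ℤ_[p]) ^ s ∣ x := by
  rw [← RingHom.mem_ker, PadicInt.ker_toZModPow, Ideal.mem_span_singleton]

lemma toZModPow_eq_one_iff (s : ℕ) (x : ℤ_[p]) :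
    PadicInt.toZModPow s x = 1 ↔ (p : ℤ_[p]) ^ s ∣ x - 1 := by
  rw [← toZModPow_eq_zero_iff, map_sub, map_one, sub_eq_zero]

lemma mem_cs_iff (s : ℕ) (g : SL p) :
    g ∈ congruenceSubgroup p s ↔
      (((p : ℤ_[p]) ^ s ∣ g 0 0 - 1 ∧ (p : ℤ_[p]) ^ s ∣ g 0 1) ∧
        ((p : ℤ_[p]) ^ s ∣ g 1 0 ∧ (p : ℤ_[p]) ^ s ∣ g 1 1 - 1)) := by
  rw [congruenceSubgroup, MonoidHom.mem_ker, Matrix.SpecialLinearGroup.ext_iff]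
  simp only [Matrix.SpecialLinearGroup.map_apply_coe, RingHom.mapMatrix_apply,
    Matrix.map_apply, Matrix.SpecialLinearGroup.coe_one, Fin.forall_fin_two,
    Matrix.one_apply_eq, Matrix.one_apply_ne, Matrix.one_apply_ne',
    Fin.zero_eq_one_iff, Fin.one_eq_zero_iff, Nat.succ_succ_ne_one, ne_eq,
    not_false_eq_true, toZModPow_eq_zero_iff, toZModPow_eq_one_iff]


noncomputable def U (x : ℤ_[p]) : SL p := ⟨!![1, x; 0, 1], by simp [Matrix.det_fin_two_of]⟩
noncomputable def L (x : ℤ_[p]) : SL p := ⟨!![1, 0; x, 1], by simp [Matrix.det_fin_two_of]⟩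
noncomputable def D (u : ℤ_[p]ˣ) : SL p :=
  ⟨!![(u : ℤ_[p]), 0; 0, ((u⁻¹ : ℤ_[p]ˣ) : ℤ_[p])], by simp [Matrix.det_fin_two_of]⟩

@[simp] lemma U_coe (x : ℤ_[p]) : ((U x : SL p) : Matrix (Fin 2) (Fin 2) ℤ_[p]) = !![1, x; 0, 1] := rfl
@[simp] lemma L_coe (x : ℤ_[p]) : ((L x : SL p) : Matrix (Fin 2) (Fin 2) ℤ_[p]) = !![1, 0; x, 1] := rfl
@[simp] lemma D_coe (u : ℤ_[p]ˣ) :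
    ((D u : SL p) : Matrix (Fin 2) (Fin 2) ℤ_[p]) = !![(u : ℤ_[p]), 0; 0, ((u⁻¹ : ℤ_[p]ˣ) : ℤ_[p])] := rfl

lemma mat2_ext {a b c d a' b' c' d' : ℤ_[p]} (h1 : a = a') (h2 : b = b')
    (h3 : c = c') (h4 : d = d') : !![a, b; c, d] = !![a', b'; c', d'] := by
  subst h1 h2 h3 h4; rfl

lemma U_mul_U (x y : ℤ_[p]) : U x * U y = U (x + y) := by
  refine Subtype.ext ?_
  simp only [Matrix.SpecialLinearGroup.coe_mul, U_coe, Matrix.mul_fin_two]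
  refine mat2_ext ?_ ?_ ?_ ?_ <;> ring

lemma L_mul_L (x y : ℤ_[p]) : L x * L y = L (x + y) := by
  refine Subtype.ext ?_
  simp only [Matrix.SpecialLinearGroup.coe_mul, L_coe, Matrix.mul_fin_two]
  refine mat2_ext ?_ ?_ ?_ ?_ <;> ring

lemma U_zero : (U 0 : SL p) = 1 := by
  refine Subtype.ext ?_
  simp only [U_coe, Matrix.SpecialLinearGroup.coe_one, Matrix.one_fin_two]

lemma L_zero : (L 0 : SL p) = 1 := by
  refine Subtype.ext ?_
  simp only [L_coe, Matrix.SpecialLinearGroup.coe_one, Matrix.one_fin_two]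

lemma U_inv (x : ℤ_[p]) : (U x)⁻¹ = U (-x) := by
  apply inv_eq_of_mul_eq_one_right; rw [U_mul_U, add_neg_cancel, U_zero]

lemma L_inv (x : ℤ_[p]) : (L x)⁻¹ = L (-x) := by
  apply inv_eq_of_mul_eq_one_right; rw [L_mul_L, add_neg_cancel, L_zero]

lemma D_mul_D (u w : ℤ_[p]ˣ) : D u * D w = D (u * w) := by
  refine Subtype.ext ?_
  simp only [Matrix.SpecialLinearGroup.coe_mul, D_coe, Matrix.mul_fin_two, mul_inv_rev]
  refine mat2_ext ?_ ?_ ?_ ?_ <;> push_cast <;> ring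

lemma D_one : (D 1 : SL p) = 1 := by
  refine Subtype.ext ?_
  simp only [D_coe, inv_one, Units.val_one, Matrix.SpecialLinearGroup.coe_one, Matrix.one_fin_two]

lemma D_inv (u : ℤ_[p]ˣ) : (D u)⁻¹ = D u⁻¹ := by
  apply inv_eq_of_mul_eq_one_right; rw [D_mul_D, mul_inv_cancel, D_one]

lemma LDU_coe (y : ℤ_[p]) (u : ℤ_[p]ˣ) (x : ℤ_[p]) :
    ((L y * D u * U x : SL p) : Matrix (Fin 2) (Fin 2) ℤ_[p]) =
      !![(u : ℤ_[p]), u * x; u * y, u * (x * y) + ((u⁻¹ : ℤ_[p]ˣ) : ℤ_[p])] := by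
  simp only [Matrix.SpecialLinearGroup.coe_mul, L_coe, D_coe, U_coe, Matrix.mul_fin_two]
  refine mat2_ext ?_ ?_ ?_ ?_ <;> ring

lemma ULU_coe (x c z : ℤ_[p]) :
    ((U x * L c * U z : SL p) : Matrix (Fin 2) (Fin 2) ℤ_[p]) =
      !![1 + x * c, z * (1 + x * c) + x; c, c * z + 1] := by
  simp only [Matrix.SpecialLinearGroup.coe_mul, L_coe, U_coe, Matrix.mul_fin_two]
  refine mat2_ext ?_ ?_ ?_ ?_ <;> ring

lemma comm_UD (x : ℤ_[p]) (u : ℤ_[p]ˣ) : ⁅U x, D u⁆ = U (x * (1 - (u : ℤ_[p]) ^ 2)) := by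
  have hu : (u : ℤ_[p]) * ((u⁻¹ : ℤ_[p]ˣ) : ℤ_[p]) = 1 := u.mul_inv
  rw [commutatorElement_def, U_inv, D_inv]
  refine Subtype.ext ?_
  simp only [Matrix.SpecialLinearGroup.coe_mul, U_coe, D_coe, Matrix.mul_fin_two, inv_inv]
  refine mat2_ext ?_ ?_ ?_ ?_
  · linear_combination hu
  · linear_combination x * hu
  · ring
  · linear_combination hu

lemma comm_LD (x : ℤ_[p]) (u : ℤ_[p]ˣ) :
    ⁅L x, D u⁻¹⁆ = L (x * (1 - (u : ℤ_[p]) ^ 2)) := by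
  have hu : (u : ℤ_[p]) * ((u⁻¹ : ℤ_[p]ˣ) : ℤ_[p]) = 1 := u.mul_inv
  rw [commutatorElement_def, L_inv, D_inv, inv_inv]
  refine Subtype.ext ?_
  simp only [Matrix.SpecialLinearGroup.coe_mul, L_coe, D_coe, Matrix.mul_fin_two, inv_inv]
  refine mat2_ext ?_ ?_ ?_ ?_
  · linear_combination hu
  · ring
  · linear_combination x * hu
  · linear_combination hu

lemma comm_UL (x y : ℤ_[p]) (δ : ℤ_[p]ˣ) (hδ : (δ : ℤ_[p]) = 1 + x * y + (x * y) ^ 2) :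
    ⁅U x, L y⁆ =
      L (x * y ^ 2 * ((δ⁻¹ : ℤ_[p]ˣ) : ℤ_[p])) * D δ *
        U (-(x ^ 2 * y) * ((δ⁻¹ : ℤ_[p]ˣ) : ℤ_[p])) := by
  have hu : (δ : ℤ_[p]) * ((δ⁻¹ : ℤ_[p]ˣ) : ℤ_[p]) = 1 := δ.mul_inv
  set e := ((δ⁻¹ : ℤ_[p]ˣ) : ℤ_[p]) with he
  rw [commutatorElement_def, U_inv, L_inv]
  refine Subtype.ext ?_
  rw [LDU_coe]
  simp only [Matrix.SpecialLinearGroup.coe_mul, U_coe, L_coe, Matrix.mul_fin_two, ← he]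
  refine mat2_ext ?_ ?_ ?_ ?_
  · linear_combination -hδ
  · linear_combination (x^2*y) * hu
  · linear_combination (-(x*y^2)) * hu
  · linear_combination (e*(x*y)^3 - (1 - x*y)) * hu + (1 - x*y) * e * hδ



lemma isUnit_iff_not_dvd (z : ℤ_[p]) : IsUnit z ↔ ¬ (p : ℤ_[p]) ∣ z := by
  rw [PadicInt.isUnit_iff, ← PadicInt.norm_lt_one_iff_dvd, not_lt]
  exact ⟨fun h => h.ge, fun h => le_antisymm (PadicInt.norm_le_one z) h⟩

lemma not_isUnit_p : ¬ IsUnit (p : ℤ_[p]) := by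
  rw [isUnit_iff_not_dvd]; simp

lemma isUnit_one_add {z : ℤ_[p]} (h : (p : ℤ_[p]) ∣ z) : IsUnit (1 + z) := by
  rw [isUnit_iff_not_dvd]
  intro hd
  have h1 : (p : ℤ_[p]) ∣ 1 := by
    have := dvd_sub hd h
    simpa using this
  exact not_isUnit_p (isUnit_of_dvd_one h1)

lemma isUnit_natCast_of_lt {m : ℕ} (hm : 0 < m) (h : m < p) : IsUnit (m : ℤ_[p]) := by
  rw [isUnit_iff_not_dvd]
  intro hd
  have h1 : ‖((m : ℤ) : ℤ_[p])‖ < 1 := by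
    push_cast
    exact (PadicInt.norm_lt_one_iff_dvd _).2 hd
  rw [PadicInt.norm_int_lt_one_iff_dvd] at h1
  have := Int.le_of_dvd (by exact_mod_cast hm) h1
  omega

lemma isUnit_two_add_pow {b : ℕ} (hp : p ≠ 2) (hb : 1 ≤ b) :
    IsUnit ((2 : ℤ_[p]) + (p : ℤ_[p]) ^ b) := by
  have h2 : IsUnit (2 : ℤ_[p]) := by
    have := isUnit_natCast_of_lt (p := p) (m := 2) (by norm_num)
      (by have := (Fact.out : p.Prime).two_le; omega)
    simpa using this
  rw [isUnit_iff_not_dvd]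
  intro hd
  have hpb : (p : ℤ_[p]) ∣ (p : ℤ_[p]) ^ b := dvd_pow_self _ (by omega)
  have : (p : ℤ_[p]) ∣ 2 := by
    have := dvd_sub hd hpb
    simpa using this
  exact (isUnit_iff_not_dvd _).1 h2 this

/-- good unit: `u ≡ 1 mod p^b` and `1 - u^2 = p^(b+v) * w` with `w` a unit. -/
lemma exists_good_unit (b : ℕ) (h2 : p = 2 → 2 ≤ b) (h3 : p = 3 → 1 ≤ b) :
    ∃ u w : ℤ_[p]ˣ, (p : ℤ_[p]) ^ b ∣ ((u : ℤ_[p]) - 1) ∧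
      (1 : ℤ_[p]) - (u : ℤ_[p]) ^ 2 =
        (p : ℤ_[p]) ^ (b + (if p = 2 then 1 else 0)) * (w : ℤ_[p]) := by
  by_cases hp2 : p = 2
  · subst hp2
    obtain ⟨k, rfl⟩ : ∃ k, b = k + 2 := ⟨b - 2, by omega⟩
    have hu : IsUnit ((1 : ℤ_[2]) + 2 ^ (k + 2)) :=
      isUnit_one_add (by exact_mod_cast dvd_pow_self (2 : ℤ_[2]) (by omega))
    have hw : IsUnit (-((1 : ℤ_[2]) + 2 ^ (k + 1))) :=
      (isUnit_one_add (by exact_mod_cast dvd_pow_self (2 : ℤ_[2]) (by omega))).neg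
    refine ⟨hu.unit, hw.unit, ?_, ?_⟩
    · rw [hu.unit_spec]
      push_cast
      simp
    · rw [hu.unit_spec, hw.unit_spec, if_pos rfl]
      push_cast
      ring
  · by_cases hb : b = 0
    · subst hb
      have hp3 : p ≠ 3 := fun h => by have := h3 h; omega
      have hp5 : 5 ≤ p := by
        have hp := (Fact.out : p.Prime)
        rcases Nat.lt_or_ge p 5 with h | h
        · interval_cases p <;> first | (exfalso; revert hp; decide) | omega
        · omega
      have hu : IsUnit (2 : ℤ_[p]) := by
        have := isUnit_natCast_of_lt (p := p) (m := 2) (by norm_num) (by omega)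
        simpa using this
      have hw : IsUnit (-(3 : ℤ_[p])) := by
        have := isUnit_natCast_of_lt (p := p) (m := 3) (by norm_num) (by omega)
        simpa using this.neg
      refine ⟨hu.unit, hw.unit, ?_, ?_⟩
      · simp
      · rw [hu.unit_spec, hw.unit_spec, if_neg hp2]
        push_cast
        ring
    · -- p odd, b ≥ 1
      have hu : IsUnit ((1 : ℤ_[p]) + (p : ℤ_[p]) ^ b) :=
        isUnit_one_add (dvd_pow_self _ hb)
      have hw : IsUnit (-((2 : ℤ_[p]) + (p : ℤ_[p]) ^ b)) :=
        (isUnit_two_add_pow hp2 (by omega)).neg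
      refine ⟨hu.unit, hw.unit, ?_, ?_⟩
      · rw [hu.unit_spec]; simp
      · rw [hu.unit_spec, hw.unit_spec, if_neg hp2]
        ring

lemma exists_hensel (m : ℕ) (hm : 1 ≤ m) (ε : ℤ_[p]) (hε : (p : ℤ_[p]) ^ m ∣ ε) :
    ∃ z : ℤ_[p], z + z ^ 2 = ε ∧ (p : ℤ_[p]) ^ m ∣ z := by
  set F : Polynomial ℤ_[p] := Polynomial.X ^ 2 + Polynomial.X - Polynomial.C ε with hF
  have hder : F.derivative = Polynomial.C 2 * Polynomial.X + 1 := by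
    simp [hF, Polynomial.derivative_sub, Polynomial.derivative_X_pow]
    rw [Polynomial.C_ofNat, one_add_one_eq_two]
  have heval : F.eval 0 = -ε := by simp [hF]
  have hdeval : F.derivative.eval 0 = 1 := by simp [hder]
  have hnorm : ‖F.eval 0‖ < ‖F.derivative.eval 0‖ ^ 2 := by
    rw [heval, hdeval, norm_neg, norm_one, one_pow]
    calc ‖ε‖ ≤ (p : ℝ) ^ (-(m : ℤ)) := by
          rw [PadicInt.norm_le_pow_iff_mem_span_pow, Ideal.mem_span_singleton]
          exact hε
      _ < 1 := by
          apply zpow_lt_one_of_neg₀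
          · exact_mod_cast (Fact.out : p.Prime).one_lt
          · omega
  obtain ⟨z, hz, hznorm, -, -⟩ := hensels_lemma hnorm
  have hz' : z + z ^ 2 = ε := by
    have : z ^ 2 + z - ε = 0 := by simpa [hF] using hz
    linear_combination this
  have hpz : (p : ℤ_[p]) ∣ z := by
    rw [← PadicInt.norm_lt_one_iff_dvd]
    simpa [hdeval] using hznorm
  have hone : IsUnit (1 + z) := isUnit_one_add hpz
  have hν : (1 + z) * ((hone.unit⁻¹ : ℤ_[p]ˣ) : ℤ_[p]) = 1 := by
    have h := hone.unit.mul_inv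
    rwa [hone.unit_spec] at h
  have hzeq : z = ε * ((hone.unit⁻¹ : ℤ_[p]ˣ) : ℤ_[p]) := by
    linear_combination (-z) * hν + ((hone.unit⁻¹ : ℤ_[p]ˣ) : ℤ_[p]) * hz'
  refine ⟨z, hz', ?_⟩
  rw [hzeq]
  exact hε.mul_right _




lemma D_mem_cs (k : ℕ) (u : ℤ_[p]ˣ) (h : (p : ℤ_[p]) ^ k ∣ ((u : ℤ_[p]) - 1)) :
    D u ∈ congruenceSubgroup p k := by
  rw [mem_cs_iff]
  have hinv : ((u⁻¹ : ℤ_[p]ˣ) : ℤ_[p]) - 1 = -((u⁻¹ : ℤ_[p]ˣ) : ℤ_[p]) * ((u : ℤ_[p]) - 1) := by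
    linear_combination u.inv_mul
  refine ⟨⟨?_, ?_⟩, ?_, ?_⟩
  · simpa [D] using h
  · simp [D]
  · simp [D]
  · show (p : ℤ_[p]) ^ k ∣ (D u) 1 1 - 1
    have : (D u) 1 1 = ((u⁻¹ : ℤ_[p]ˣ) : ℤ_[p]) := by simp [D]
    rw [this, hinv]
    exact h.mul_left _

lemma U_mem_cs (k : ℕ) {z : ℤ_[p]} (h : (p : ℤ_[p]) ^ k ∣ z) :
    U z ∈ congruenceSubgroup p k := by
  rw [mem_cs_iff]
  refine ⟨⟨?_, ?_⟩, ?_, ?_⟩ <;> simp [U, h]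

lemma L_mem_cs (k : ℕ) {z : ℤ_[p]} (h : (p : ℤ_[p]) ^ k ∣ z) :
    L z ∈ congruenceSubgroup p k := by
  rw [mem_cs_iff]
  refine ⟨⟨?_, ?_⟩, ?_, ?_⟩ <;> simp [L, h]

lemma det_rel (g : SL p) : g 0 0 * g 1 1 - g 0 1 * g 1 0 = 1 := by
  have h := g.prop
  rwa [Matrix.det_fin_two] at h

lemma core (a b : ℕ) (h2 : p = 2 → 2 ≤ a ∧ 2 ≤ b) (h3 : p = 3 → 1 ≤ a ∧ 1 ≤ b)
    (H : Subgroup (SL p))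
    (hH : ∀ x y : SL p, x ∈ congruenceSubgroup p a → y ∈ congruenceSubgroup p b →
      ⁅x, y⁆ ∈ H) :
    congruenceSubgroup p (a + b + (if p = 2 then 1 else 0)) ≤ H := by
  set v : ℕ := if p = 2 then 1 else 0 with hv
  set t : ℕ := a + b + v with htdef
  have hvb : v ≤ b := by
    by_cases hp : p = 2
    · rw [hv, if_pos hp]; exact le_trans (by norm_num) (h2 hp).2
    · rw [hv, if_neg hp]; exact Nat.zero_le _
  have hva : v ≤ a := by
    by_cases hp : p = 2
    · rw [hv, if_pos hp]; exact le_trans (by norm_num) (h2 hp).1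
    · rw [hv, if_neg hp]; exact Nat.zero_le _
  obtain ⟨u, w, hud, hw1⟩ := exists_good_unit b (fun hp => (h2 hp).2) (fun hp => (h3 hp).2)
  have hww : (w : ℤ_[p]) * ((w⁻¹ : ℤ_[p]ˣ) : ℤ_[p]) = 1 := w.mul_inv
  have hDu : D u ∈ congruenceSubgroup p b := D_mem_cs b u hud
  have hDuinv : D u⁻¹ ∈ congruenceSubgroup p b := by
    apply D_mem_cs
    have hinv : ((u⁻¹ : ℤ_[p]ˣ) : ℤ_[p]) - 1 = -((u⁻¹ : ℤ_[p]ˣ) : ℤ_[p]) * ((u : ℤ_[p]) - 1) := by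
      linear_combination u.inv_mul
    rw [hinv]
    exact hud.mul_left _
  -- A1 : upper unipotents
  have hU : ∀ z : ℤ_[p], (p : ℤ_[p]) ^ t ∣ z → U z ∈ H := by
    intro z hz
    obtain ⟨z', rfl⟩ := hz
    have key : ((p : ℤ_[p]) ^ a * z' * ((w⁻¹ : ℤ_[p]ˣ) : ℤ_[p])) * (1 - (u : ℤ_[p]) ^ 2)
        = (p : ℤ_[p]) ^ t * z' := by
      rw [hw1, htdef, show a + b + v = a + (b + v) from by omega, pow_add]
      linear_combination ((p : ℤ_[p]) ^ a * (p : ℤ_[p]) ^ (b + v) * z') * hww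
    rw [← key, ← comm_UD]
    exact hH _ _ (U_mem_cs a (Dvd.dvd.mul_right (Dvd.dvd.mul_right (dvd_refl _) _) _)) hDu
  -- A2 : lower unipotents
  have hL : ∀ z : ℤ_[p], (p : ℤ_[p]) ^ t ∣ z → L z ∈ H := by
    intro z hz
    obtain ⟨z', rfl⟩ := hz
    have key : ((p : ℤ_[p]) ^ a * z' * ((w⁻¹ : ℤ_[p]ˣ) : ℤ_[p])) * (1 - (u : ℤ_[p]) ^ 2)
        = (p : ℤ_[p]) ^ t * z' := by
      rw [hw1, htdef, show a + b + v = a + (b + v) from by omega, pow_add]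
      linear_combination ((p : ℤ_[p]) ^ a * (p : ℤ_[p]) ^ (b + v) * z') * hww
    rw [← key, ← comm_LD]
    exact hH _ _ (L_mem_cs a (Dvd.dvd.mul_right (Dvd.dvd.mul_right (dvd_refl _) _) _)) hDuinv
  -- A3 : diagonals (for t ≥ 1)
  have hD : 1 ≤ t → ∀ ε : ℤ_[p], (p : ℤ_[p]) ^ t ∣ ε → ∀ δ : ℤ_[p]ˣ,
      ((δ : ℤ_[p]) = 1 + ε) → D δ ∈ H := by
    intro ht ε hε δ hδ
    obtain ⟨z, hzeq, hzdvd⟩ := exists_hensel t ht ε hε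
    have hzab : (p : ℤ_[p]) ^ (a + b) ∣ z :=
      dvd_trans (pow_dvd_pow _ (by omega)) hzdvd
    obtain ⟨z₀, hz₀⟩ := hzab
    set x : ℤ_[p] := (p : ℤ_[p]) ^ a with hx
    set y : ℤ_[p] := (p : ℤ_[p]) ^ b * z₀ with hy
    have hxy : x * y = z := by rw [hx, hy, hz₀, pow_add]; ring
    have hδ' : (δ : ℤ_[p]) = 1 + x * y + (x * y) ^ 2 := by
      rw [hxy, hδ, ← hzeq]; ring
    have hcomm := comm_UL x y δ hδ'
    set e : ℤ_[p] := ((δ⁻¹ : ℤ_[p]ˣ) : ℤ_[p]) with he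
    have hM : ⁅U x, L y⁆ ∈ H :=
      hH _ _ (U_mem_cs a (dvd_refl _)) (L_mem_cs b (Dvd.dvd.mul_right (dvd_refl _) _))
    have hLp : L (x * y ^ 2 * e) ∈ H := by
      apply hL
      have hrw : x * y ^ 2 * e = (p : ℤ_[p]) ^ (a + 2 * b) * (z₀ ^ 2 * e) := by
        rw [hx, hy, pow_add, pow_mul]; ring
      rw [hrw]
      exact Dvd.dvd.mul_right (pow_dvd_pow _ (by omega)) _
    have hUp : U (-(x ^ 2 * y) * e) ∈ H := by
      apply hU
      have hrw : -(x ^ 2 * y) * e = (p : ℤ_[p]) ^ (2 * a + b) * (-z₀ * e) := by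
        rw [hx, hy, pow_add, pow_mul]; ring
      rw [hrw]
      exact Dvd.dvd.mul_right (pow_dvd_pow _ (by omega)) _
    have hfact : D δ = (L (x * y ^ 2 * e))⁻¹ * ⁅U x, L y⁆ * (U (-(x ^ 2 * y) * e))⁻¹ := by
      rw [hcomm]; group
    rw [hfact]
    exact mul_mem (mul_mem (inv_mem hLp) hM) (inv_mem hUp)
  -- main case split
  intro g hg
  rw [mem_cs_iff] at hg
  obtain ⟨⟨hg00, hg01⟩, hg10, hg11⟩ := hg
  by_cases ht : 1 ≤ t
  · -- LDU factorization
    have hαu : IsUnit (g 0 0) := by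
      have : g 0 0 = 1 + (g 0 0 - 1) := by ring
      rw [this]
      exact isUnit_one_add (dvd_trans (dvd_pow_self _ (by omega)) hg00)
    set α : ℤ_[p]ˣ := hαu.unit with hα
    have hαs : (α : ℤ_[p]) = g 0 0 := hαu.unit_spec
    set e : ℤ_[p] := ((α⁻¹ : ℤ_[p]ˣ) : ℤ_[p]) with he
    have hae : g 0 0 * e = 1 := by
      have h := α.mul_inv
      rwa [hαs] at h
    have hdet := det_rel g
    have hfact : g = L (g 1 0 * e) * D α * U (g 0 1 * e) := by
      refine Subtype.ext ?_
      rw [LDU_coe, ← Matrix.ext_iff]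
      simp only [Fin.forall_fin_two, Matrix.cons_val', Matrix.cons_val_zero,
        Matrix.cons_val_one, Matrix.head_cons, Matrix.empty_val',
        Matrix.cons_val_fin_one, Matrix.of_apply, Matrix.vecHead, Matrix.vecTail]
      refine ⟨⟨?_, ?_⟩, ?_, ?_⟩
      · exact hαs.symm
      · rw [hαs]; linear_combination (-(g 0 1)) * hae
      · rw [hαs]; linear_combination (-(g 1 0)) * hae
      · rw [hαs]; linear_combination e * hdet - (g 1 1 + g 0 1 * g 1 0 * e) * hae
    rw [hfact]
    refine mul_mem (mul_mem (hL _ (hg10.mul_right e)) ?_) (hU _ (hg01.mul_right e))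
    exact hD ht (g 0 0 - 1) hg00 α (by rw [hαs]; ring)
  · -- t = 0 : everything
    have ht0 : t = 0 := by omega
    have hab : a = 0 ∧ b = 0 ∧ v = 0 := by omega
    have hU' : ∀ z : ℤ_[p], U z ∈ H := fun z => hU z (by rw [ht0]; simpa using one_dvd z)
    have hL' : ∀ z : ℤ_[p], L z ∈ H := fun z => hL z (by rw [ht0]; simpa using one_dvd z)
    have key : ∀ h : SL p, IsUnit (h 1 0) → h ∈ H := by
      intro h hunit
      set e : ℤ_[p] := ((hunit.unit⁻¹ : ℤ_[p]ˣ) : ℤ_[p]) with he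
      have hge : h 1 0 * e = 1 := by
        have hh := hunit.unit.mul_inv
        rwa [hunit.unit_spec] at hh
      have hdet := det_rel h
      have hfact : h = U ((h 0 0 - 1) * e) * L (h 1 0) * U ((h 1 1 - 1) * e) := by
        refine Subtype.ext ?_
        rw [ULU_coe, ← Matrix.ext_iff]
        simp only [Fin.forall_fin_two, Matrix.cons_val', Matrix.cons_val_zero,
          Matrix.cons_val_one, Matrix.head_cons, Matrix.empty_val',
          Matrix.cons_val_fin_one, Matrix.of_apply, Matrix.vecHead, Matrix.vecTail]
        refine ⟨⟨?_, ?_⟩, ?_, ?_⟩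
        · linear_combination (-(h 0 0 - 1)) * hge
        · linear_combination (-(h 0 1 + (h 1 1 - 1) * (h 0 0 - 1) * e)) * hge - e * hdet
        · trivial
        · linear_combination (-(h 1 1 - 1)) * hge
      rw [hfact]
      exact mul_mem (mul_mem (hU' _) (hL' _)) (hU' _)
    by_cases hu : IsUnit (g 1 0)
    · exact key g hu
    · have h10 : (p : ℤ_[p]) ∣ g 1 0 := by rwa [isUnit_iff_not_dvd, not_not] at hu
      have h00 : IsUnit (g 0 0) := by
        rw [isUnit_iff_not_dvd]
        intro hd
        have hdet := det_rel g
        have : (p : ℤ_[p]) ∣ 1 := by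
          rw [← hdet]
          exact dvd_sub (hd.mul_right _) (h10.mul_left _)
        exact not_isUnit_p (isUnit_of_dvd_one this)
      have hent : ((L 1 * g : SL p) : Matrix (Fin 2) (Fin 2) ℤ_[p]) 1 0 = g 0 0 + g 1 0 := by
        rw [Matrix.SpecialLinearGroup.coe_mul, L_coe]
        simp [Matrix.mul_apply, Fin.sum_univ_two]
      have hsum : IsUnit (((L 1 * g : SL p) : Matrix (Fin 2) (Fin 2) ℤ_[p]) 1 0) := by
        rw [hent, isUnit_iff_not_dvd]
        intro hd
        have : (p : ℤ_[p]) ∣ g 0 0 := by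
          have := dvd_sub hd h10
          simpa using this
        exact (isUnit_iff_not_dvd _).1 h00 this
      have hmem := key (L 1 * g) hsum
      have : g = (L 1)⁻¹ * (L 1 * g) := by group
      rw [this]
      exact mul_mem (inv_mem (hL' 1)) hmem


lemma pi_comm_apply {n : ℕ} (x y : Fin n → SL p) (k : Fin n) :
    ⁅x, y⁆ k = ⁅x k, y k⁆ := rfl

end GR

/-- Integral Goursat–Ribet lemma for `SL₂(ℤ_ℓ)^n`: a closed subgroup of
`SL₂(ℤ_ℓ)^n` whose projection onto each pair of factors `(i,j)` contains
`B_ℓ(s_{ij}) × B_ℓ(s_{ij})` contains `∏ᵢ B_ℓ(Σ_{j≠i} s_{ij} + (n−2)v)`,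
where `v = 1` if `ℓ = 2` and `v = 0` otherwise. -/
theorem goursat_ribet_sl2 (p : ℕ) [Fact p.Prime] (n : ℕ) (hn : 2 ≤ n)
    (G : Subgroup (Fin n → Matrix.SpecialLinearGroup (Fin 2) ℤ_[p]))
    (hGclosed : IsClosed (G : Set (Fin n → Matrix.SpecialLinearGroup (Fin 2) ℤ_[p])))
    (s : Fin n → Fin n → ℕ)
    (hs2 : p = 2 → ∀ i j, i ≠ j → 2 ≤ s i j)
    (hs3 : p = 3 → ∀ i j, i ≠ j → 1 ≤ s i j)
    (hproj : ∀ i j, i ≠ j →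
      ∀ a b : Matrix.SpecialLinearGroup (Fin 2) ℤ_[p],
        a ∈ congruenceSubgroup p (s i j) → b ∈ congruenceSubgroup p (s i j) →
        ∃ g ∈ G, g i = a ∧ g j = b) :
    ∀ g : Fin n → Matrix.SpecialLinearGroup (Fin 2) ℤ_[p],
      (∀ i, g i ∈ congruenceSubgroup p
        ((∑ j ∈ Finset.univ.erase i, s i j) + (n - 2) * (if p = 2 then 1 else 0))) →
      g ∈ G := by
  classical
  set v : ℕ := if p = 2 then 1 else 0 with hv
  have step : ∀ S : Finset (Fin n), ∀ i : Fin n, S ⊆ Finset.univ.erase i → S.Nonempty →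
      ∀ x : Matrix.SpecialLinearGroup (Fin 2) ℤ_[p],
        x ∈ congruenceSubgroup p ((∑ j ∈ S, s i j) + (S.card - 1) * v) →
        ∃ h ∈ G, h i = x ∧ ∀ j ∈ S, h j = 1 := by
    intro S
    induction S using Finset.induction_on with
    | empty =>
      intro i _ hne
      simp at hne
    | @insert j S' hj ih =>
      intro i hsub _ x hx
      have hij : i ≠ j := by
        have h := hsub (Finset.mem_insert_self j S')
        rw [Finset.mem_erase] at h
        exact (h.1).symm
      rcases S'.eq_empty_or_nonempty with rfl | hS'
      · -- base case : S = {j}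
        have hx' : x ∈ congruenceSubgroup p (s i j) := by
          simpa using hx
        obtain ⟨h, hG, hi, hj1⟩ := hproj i j hij x 1 hx' (one_mem _)
        refine ⟨h, hG, hi, ?_⟩
        intro k hk
        simp only [Finset.mem_insert, Finset.notMem_empty, or_false] at hk
        subst hk
        exact hj1
      · -- inductive step
        set m : ℕ := (∑ k ∈ S', s i k) + (S'.card - 1) * v with hm
        have hsub' : S' ⊆ Finset.univ.erase i := fun k hk => hsub (Finset.mem_insert_of_mem hk)
        obtain ⟨k₀, hk₀⟩ := hS'
        have hik₀ : i ≠ k₀ := by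
          have h := hsub' hk₀
          rw [Finset.mem_erase] at h
          exact (h.1).symm
        have hsk₀m : s i k₀ ≤ m := by
          rw [hm]
          exact le_trans (Finset.single_le_sum (f := fun k => s i k)
            (fun _ _ => Nat.zero_le _) hk₀) (Nat.le_add_right _ _)
        let H : Subgroup (Matrix.SpecialLinearGroup (Fin 2) ℤ_[p]) :=
          { carrier := {y | ∃ h ∈ G, h i = y ∧ ∀ k ∈ insert j S', h k = 1}
            one_mem' := ⟨1, one_mem _, rfl, fun k _ => rfl⟩
            mul_mem' := by
              rintro y z ⟨hy, hyG, rfl, hy1⟩ ⟨hz, hzG, rfl, hz1⟩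
              exact ⟨hy * hz, mul_mem hyG hzG, rfl,
                fun k hk => by simp [Pi.mul_apply, hy1 k hk, hz1 k hk]⟩
            inv_mem' := by
              rintro y ⟨hy, hyG, rfl, hy1⟩
              exact ⟨hy⁻¹, inv_mem hyG, rfl, fun k hk => by simp [Pi.inv_apply, hy1 k hk]⟩ }
        have hcomm : ∀ x' y' : Matrix.SpecialLinearGroup (Fin 2) ℤ_[p],
            x' ∈ congruenceSubgroup p (s i j) → y' ∈ congruenceSubgroup p m →
            ⁅x', y'⁆ ∈ H := by
          intro x' y' hx' hy'
          obtain ⟨gx, hgxG, hgxi, hgxj⟩ := hproj i j hij x' 1 hx' (one_mem _)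
          obtain ⟨gy, hgyG, hgyi, hgy1⟩ := ih i hsub' ⟨k₀, hk₀⟩ y' hy'
          refine ⟨⁅gx, gy⁆, ?_, ?_, ?_⟩
          · rw [commutatorElement_def]
            exact mul_mem (mul_mem (mul_mem hgxG hgyG) (inv_mem hgxG)) (inv_mem hgyG)
          · rw [GR.pi_comm_apply, hgxi, hgyi]
          · intro k hk
            rw [Finset.mem_insert] at hk
            rcases hk with rfl | hk
            · rw [GR.pi_comm_apply, hgxj]
              simp [commutatorElement_def]
            · rw [GR.pi_comm_apply, hgy1 k hk]
              simp [commutatorElement_def]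
        have hcore := GR.core (s i j) m
          (fun hp => ⟨hs2 hp i j hij, le_trans (hs2 hp i k₀ hik₀) hsk₀m⟩)
          (fun hp => ⟨hs3 hp i j hij, le_trans (hs3 hp i k₀ hik₀) hsk₀m⟩)
          H hcomm
        have harith : (∑ k ∈ insert j S', s i k) + ((insert j S').card - 1) * v
            = s i j + m + v := by
          rw [Finset.sum_insert hj, Finset.card_insert_of_notMem hj, hm]
          obtain ⟨c, hc⟩ : ∃ c, S'.card = c + 1 :=
            ⟨S'.card - 1, by have := Finset.card_pos.mpr ⟨k₀, hk₀⟩; omega⟩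
          rw [hc]
          simp only [Nat.add_sub_cancel]
          ring
        rw [harith] at hx
        have hxH := hcore hx
        obtain ⟨h, hG, hi, h1⟩ := hxH
        exact ⟨h, hG, hi, h1⟩
  intro g hg
  have key : ∀ i : Fin n, ∃ h ∈ G, h i = g i ∧ ∀ j, j ≠ i → h j = 1 := by
    intro i
    have hne : (Finset.univ.erase i).Nonempty := by
      rw [← Finset.card_pos, Finset.card_erase_of_mem (Finset.mem_univ i), Finset.card_univ,
        Fintype.card_fin]
      omega
    have hcard : (Finset.univ.erase i).card - 1 = n - 2 := by
      rw [Finset.card_erase_of_mem (Finset.mem_univ i), Finset.card_univ, Fintype.card_fin]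
      omega
    obtain ⟨h, hG, hi, h1⟩ := step (Finset.univ.erase i) i (le_refl _) hne (g i)
      (by rw [hcard]; exact hg i)
    exact ⟨h, hG, hi, fun j hj => h1 j (Finset.mem_erase.mpr ⟨hj, Finset.mem_univ j⟩)⟩
  -- assemble g as a product of single-coordinate elements
  have assemble : ∀ T : Finset (Fin n),
      (fun k => if k ∈ T then g k else 1) ∈ G := by
    intro T
    induction T using Finset.induction_on with
    | empty => simp only [Finset.notMem_empty, if_false]; exact one_mem G
    | @insert i T' hiT' ihT =>
      obtain ⟨h, hG, hi, h1⟩ := key i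
      have heq : (fun k => if k ∈ insert i T' then g k else 1)
          = h * (fun k => if k ∈ T' then g k else 1) := by
        funext k
        rw [Pi.mul_apply]
        by_cases hk : k = i
        · subst hk
          rw [if_pos (Finset.mem_insert_self k T'), if_neg hiT', hi, mul_one]
        · rw [h1 k hk, one_mul]
          by_cases hk' : k ∈ T'
          · rw [if_pos hk', if_pos (Finset.mem_insert_of_mem hk')]
          · rw [if_neg hk', if_neg (by simp [hk, hk'])]
      rw [heq]
      exact mul_mem hG ihT
  have := assemble Finset.univ
  simpa using this
end

section
/- Let ℓ be a prime and G a closed subgroup of GL₂(ℤ_ℓ)² (with G contained in the kernel of reduction mod 2 in each factor when ℓ = 2). Let L(G) be the ℤ_ℓ-span of Θ₂(G), where Θ₂(g₁,g₂) = (g₁ − tr(g₁)/2·Id, g₂ − tr(g₂)/2·Id). Let L₀ = {(l₁,l₂) ∈ L(G) : l₁ = 0}, identified with a ℤ_ℓ-submodule of 𝔰𝔩₂(ℤ_ℓ) via the second coordinate. If H ⊆ SL₂(ℤ_ℓ) is a subgroup such that for every g ∈ H there exists h with (h,g) ∈ G, then L₀ is stable under conjugation by H, i.e. g^{−1}·L₀·g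 ⊆ L₀ for all g ∈ H. -/
private lemma trace_conj {R : Type*} [CommRing R]
    (a : (Matrix (Fin 2) (Fin 2) R)ˣ) (v : Matrix (Fin 2) (Fin 2) R) :
    ((↑a⁻¹ : Matrix (Fin 2) (Fin 2) R) * v * (↑a : Matrix (Fin 2) (Fin 2) R)).trace = v.trace := by
  rw [Matrix.trace_mul_cycle, ← Units.val_mul, mul_inv_cancel, Units.val_one, one_mul]

private lemma conj_gen {R : Type*} [CommRing R] (a : (Matrix (Fin 2) (Fin 2) R)ˣ)
    (y v : Matrix (Fin 2) (Fin 2) R) (t : R)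
    (h : (2 : R) • y = (2 : R) • v - t • (1 : Matrix (Fin 2) (Fin 2) R)) :
    (2 : R) • ((↑a⁻¹ : Matrix (Fin 2) (Fin 2) R) * y * (↑a : Matrix (Fin 2) (Fin 2) R))
      = (2 : R) • ((↑a⁻¹ : Matrix (Fin 2) (Fin 2) R) * v * (↑a : Matrix (Fin 2) (Fin 2) R))
        - t • (1 : Matrix (Fin 2) (Fin 2) R) := by
  have h' := congrArg (fun m => (↑a⁻¹ : Matrix (Fin 2) (Fin 2) R) * m * (↑a : Matrix (Fin 2) (Fin 2) R)) h
  simp only [Matrix.mul_sub, Matrix.sub_mul, Matrix.mul_smul, Matrix.smul_mul,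
    Matrix.mul_one, ← Units.val_mul, inv_mul_cancel, Units.val_one, Matrix.one_mul] at h'
  exact h'

/-- Let `G` be a closed subgroup of `GL₂(ℤ_ℓ)²` (contained in the kernel of
reduction mod 2 in each factor when `ℓ = 2`), `L(G)` the `ℤ_ℓ`-span of
`Θ₂(G)`, and `L₀ = {(l₁,l₂) ∈ L(G) : l₁ = 0}`.  If `H ⊆ SL₂(ℤ_ℓ)` is such that
every `g ∈ H` lifts to an element `(h,g) ∈ G`, then `L₀` is stable under
conjugation by `H` (on the second coordinate). -/
theorem L0_conj_stable (p : ℕ) [Fact p.Prime]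
    (G : Subgroup ((Matrix (Fin 2) (Fin 2) ℤ_[p])ˣ × (Matrix (Fin 2) (Fin 2) ℤ_[p])ˣ))
    (hGclosed : IsClosed (G : Set ((Matrix (Fin 2) (Fin 2) ℤ_[p])ˣ × (Matrix (Fin 2) (Fin 2) ℤ_[p])ˣ)))
    (h2 : p = 2 → ∀ u ∈ G,
      (∀ i j, (2 : ℤ_[p]) ∣ ((u.1 : Matrix (Fin 2) (Fin 2) ℤ_[p]) - 1) i j) ∧
      (∀ i j, (2 : ℤ_[p]) ∣ ((u.2 : Matrix (Fin 2) (Fin 2) ℤ_[p]) - 1) i j))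
    (L : Submodule ℤ_[p] (Matrix (Fin 2) (Fin 2) ℤ_[p] × Matrix (Fin 2) (Fin 2) ℤ_[p]))
    (hL : L = Submodule.span ℤ_[p]
      {x : Matrix (Fin 2) (Fin 2) ℤ_[p] × Matrix (Fin 2) (Fin 2) ℤ_[p] | ∃ u ∈ G,
        (2 : ℤ_[p]) • x.1
          = (2 : ℤ_[p]) • (u.1 : Matrix (Fin 2) (Fin 2) ℤ_[p])
            - (Matrix.trace (u.1 : Matrix (Fin 2) (Fin 2) ℤ_[p])) • (1 : Matrix (Fin 2) (Fin 2) ℤ_[p]) ∧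
        (2 : ℤ_[p]) • x.2
          = (2 : ℤ_[p]) • (u.2 : Matrix (Fin 2) (Fin 2) ℤ_[p])
            - (Matrix.trace (u.2 : Matrix (Fin 2) (Fin 2) ℤ_[p])) • (1 : Matrix (Fin 2) (Fin 2) ℤ_[p])})
    (H : Set (Matrix (Fin 2) (Fin 2) ℤ_[p]))
    (hHdet : ∀ g ∈ H, g.det = 1)
    (hHlift : ∀ g ∈ H, ∃ u ∈ G, (u.2 : Matrix (Fin 2) (Fin 2) ℤ_[p]) = g) :
    ∀ g ∈ H, ∀ l₂ : Matrix (Fin 2) (Fin 2) ℤ_[p],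
      ((0 : Matrix (Fin 2) (Fin 2) ℤ_[p]), l₂) ∈ L →
      ((0 : Matrix (Fin 2) (Fin 2) ℤ_[p]), g⁻¹ * l₂ * g) ∈ L := by
  intro g hg l₂ hl₂
  obtain ⟨u, huG, hu2⟩ := hHlift g hg
  let φ : (Matrix (Fin 2) (Fin 2) ℤ_[p] × Matrix (Fin 2) (Fin 2) ℤ_[p]) →ₗ[ℤ_[p]]
      (Matrix (Fin 2) (Fin 2) ℤ_[p] × Matrix (Fin 2) (Fin 2) ℤ_[p]) :=
    { toFun := fun x => ((↑u.1⁻¹ : Matrix (Fin 2) (Fin 2) ℤ_[p]) * x.1 * (↑u.1 : Matrix (Fin 2) (Fin 2) ℤ_[p]),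
        (↑u.2⁻¹ : Matrix (Fin 2) (Fin 2) ℤ_[p]) * x.2 * (↑u.2 : Matrix (Fin 2) (Fin 2) ℤ_[p]))
      map_add' := by
        intro x y
        simp [Prod.ext_iff, mul_add, add_mul]
      map_smul' := by
        intro c x
        simp [Prod.ext_iff, Matrix.mul_smul, Matrix.smul_mul] }
  have key : ∀ x ∈ L, φ x ∈ L := by
    rw [hL]
    intro x hx
    refine Submodule.span_induction ?_ ?_ ?_ ?_ hx
    · rintro y ⟨v, hvG, h1, h2⟩
      apply Submodule.subset_span
      refine ⟨u⁻¹ * v * u, mul_mem (mul_mem (inv_mem huG) hvG) huG, ?_, ?_⟩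
      · have e1 : (((u⁻¹ * v * u).1 : Matrix (Fin 2) (Fin 2) ℤ_[p]))
            = (↑u.1⁻¹ : Matrix (Fin 2) (Fin 2) ℤ_[p]) * (↑v.1 : Matrix (Fin 2) (Fin 2) ℤ_[p]) * (↑u.1 : Matrix (Fin 2) (Fin 2) ℤ_[p]) := rfl
        show (2 : ℤ_[p]) • ((↑u.1⁻¹ : Matrix (Fin 2) (Fin 2) ℤ_[p]) * y.1 * (↑u.1 : Matrix (Fin 2) (Fin 2) ℤ_[p])) = _
        rw [e1, trace_conj]
        exact conj_gen u.1 y.1 ↑v.1 _ h1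
      · have e1 : (((u⁻¹ * v * u).2 : Matrix (Fin 2) (Fin 2) ℤ_[p]))
            = (↑u.2⁻¹ : Matrix (Fin 2) (Fin 2) ℤ_[p]) * (↑v.2 : Matrix (Fin 2) (Fin 2) ℤ_[p]) * (↑u.2 : Matrix (Fin 2) (Fin 2) ℤ_[p]) := rfl
        show (2 : ℤ_[p]) • ((↑u.2⁻¹ : Matrix (Fin 2) (Fin 2) ℤ_[p]) * y.2 * (↑u.2 : Matrix (Fin 2) (Fin 2) ℤ_[p])) = _
        rw [e1, trace_conj]
        exact conj_gen u.2 y.2 ↑v.2 _ h2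
    · rw [map_zero]; exact Submodule.zero_mem _
    · intro a b _ _ ha hb
      rw [map_add]; exact Submodule.add_mem _ ha hb
    · intro c a _ ha
      rw [map_smul]; exact Submodule.smul_mem _ c ha
  have hmem := key (0, l₂) hl₂
  have hφ : φ (0, l₂) = ((0 : Matrix (Fin 2) (Fin 2) ℤ_[p]), g⁻¹ * l₂ * g) := by
    have h0 : (↑u.1⁻¹ : Matrix (Fin 2) (Fin 2) ℤ_[p]) * 0 * (↑u.1 : Matrix (Fin 2) (Fin 2) ℤ_[p]) = 0 := by
      rw [Matrix.mul_zero, Matrix.zero_mul]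
    have h1 : (↑u.2⁻¹ : Matrix (Fin 2) (Fin 2) ℤ_[p]) * l₂ * (↑u.2 : Matrix (Fin 2) (Fin 2) ℤ_[p]) = g⁻¹ * l₂ * g := by
      rw [← hu2, ← Matrix.coe_units_inv]
    exact Prod.ext h0 h1
  rwa [hφ] at hmem
end

section
/- Let ℓ be an odd prime and let l₁, l₂ ∈ 𝔰𝔩₂(ℤ_ℓ), λ₁, λ₂ ∈ ℤ_ℓ, M ∈ GL₂(ℚ_ℓ) ∩ M₂(ℤ_ℓ), and T ≥ 1. Suppose: (i) l₂ ≡ M l₁ M^{−1} (mod ℓ^T); (ii) tr(l₁²) ≡ tr(l₂²) (mod ℓ^T); (iii) the element (Θ(l₁²) + 2λ₁l₁, Θ(l₂²) + 2λ₂l₂) satisfies Θ(l₂²) + 2λ₂l₂ ≡ M(Θ(l₁²) + 2λ₁l₁)M^{−1} (mod ℓ^T), where Θ(x) = x − (tr x)/2·Id; (iv) at least one coordinate of l₂ is not divisible by ℓ. Then λ₁ ≡ λ₂ (mod ℓ^T). -/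
/-- The trace-zero projection `Θ(x) = x − (tr x / 2)·Id` over `ℚ_ℓ`. -/
noncomputable def thetaQ (p : ℕ) [Fact p.Prime]
    (m : Matrix (Fin 2) (Fin 2) ℚ_[p]) : Matrix (Fin 2) (Fin 2) ℚ_[p] :=
  m - (Matrix.trace m / 2) • (1 : Matrix (Fin 2) (Fin 2) ℚ_[p])

/-- The image in `M₂(ℚ_ℓ)` of an integral matrix. -/
noncomputable def toQ (p : ℕ) [Fact p.Prime]
    (m : Matrix (Fin 2) (Fin 2) ℤ_[p]) : Matrix (Fin 2) (Fin 2) ℚ_[p] :=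
  m.map (fun x => (x : ℚ_[p]))

/-- Let `ℓ` be odd, `l₁, l₂ ∈ 𝔰𝔩₂(ℤ_ℓ)`, `λ₁, λ₂ ∈ ℤ_ℓ`, and `M` an integral
matrix with nonzero determinant.  Assume (i) `l₂ ≡ M l₁ M⁻¹ (mod ℓ^T)`,
(ii) `tr(l₁²) ≡ tr(l₂²) (mod ℓ^T)`, (iii)
`Θ(l₂²) + 2λ₂ l₂ ≡ M (Θ(l₁²) + 2λ₁ l₁) M⁻¹ (mod ℓ^T)`, and (iv) some entry of
`l₂` is not divisible by `ℓ`.  Then `λ₁ ≡ λ₂ (mod ℓ^T)`.  (Congruences between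
`ℚ_ℓ`-matrices are stated entrywise via the `ℓ`-adic norm.) -/
theorem lambdas_congruent (p : ℕ) [Fact p.Prime] (hp : p ≠ 2) (T : ℕ) (hT : 1 ≤ T)
    (l₁ l₂ : Matrix (Fin 2) (Fin 2) ℤ_[p])
    (hl₁ : Matrix.trace l₁ = 0) (hl₂ : Matrix.trace l₂ = 0)
    (lam₁ lam₂ : ℤ_[p])
    (M : Matrix (Fin 2) (Fin 2) ℤ_[p]) (hM : (toQ p M).det ≠ 0)
    (hi : ∀ i j, ‖(toQ p l₂ - toQ p M * toQ p l₁ * (toQ p M)⁻¹) i j‖ ≤ (p : ℝ) ^ (-(T : ℤ)))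
    (hii : (p : ℤ_[p]) ^ T ∣ (Matrix.trace (l₁ * l₁) - Matrix.trace (l₂ * l₂)))
    (hiii : ∀ i j, ‖((thetaQ p (toQ p l₂ * toQ p l₂) + ((2 * lam₂ : ℤ_[p]) : ℚ_[p]) • toQ p l₂)
        - toQ p M * (thetaQ p (toQ p l₁ * toQ p l₁) + ((2 * lam₁ : ℤ_[p]) : ℚ_[p]) • toQ p l₁)
            * (toQ p M)⁻¹) i j‖ ≤ (p : ℝ) ^ (-(T : ℤ)))
    (hiv : ∃ i j, ¬ ((p : ℤ_[p]) ∣ l₂ i j)) :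
    (p : ℤ_[p]) ^ T ∣ (lam₁ - lam₂) := by
  set ε : ℝ := (p : ℝ) ^ (-(T : ℤ)) with hεdef
  have hε1 : ε ≤ 1 := by
    apply zpow_le_one_of_nonpos₀
    · exact_mod_cast (Fact.out : p.Prime).one_le
    · omega
  -- notation
  set N : Matrix (Fin 2) (Fin 2) ℚ_[p] := toQ p M with hN
  set L1 : Matrix (Fin 2) (Fin 2) ℚ_[p] := toQ p l₁ with hL1
  set L2 : Matrix (Fin 2) (Fin 2) ℚ_[p] := toQ p l₂ with hL2
  set C : Matrix (Fin 2) (Fin 2) ℚ_[p] := N * L1 * N⁻¹ with hC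
  set D : Matrix (Fin 2) (Fin 2) ℚ_[p] := L2 - C with hD
  set c₁ : ℚ_[p] := ((2 * lam₁ : ℤ_[p]) : ℚ_[p]) with hc₁
  set c₂ : ℚ_[p] := ((2 * lam₂ : ℤ_[p]) : ℚ_[p]) with hc₂
  set t : ℚ_[p] := Matrix.trace (L1 * L1) / 2 - Matrix.trace (L2 * L2) / 2 with ht
  set X : Matrix (Fin 2) (Fin 2) ℚ_[p] :=
    (thetaQ p (L2 * L2) + c₂ • L2) - N * (thetaQ p (L1 * L1) + c₁ • L1) * N⁻¹ with hX
  have hdet : IsUnit N.det := isUnit_iff_ne_zero.mpr hM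
  have hNN : N * N⁻¹ = 1 := Matrix.mul_nonsing_inv N hdet
  have hNN' : N⁻¹ * N = 1 := Matrix.nonsing_inv_mul N hdet
  -- conjugation identities
  have hCC : N * (L1 * L1) * N⁻¹ = C * C := by
    rw [hC]
    calc N * (L1 * L1) * N⁻¹ = N * L1 * (N⁻¹ * N) * L1 * N⁻¹ := by
          rw [hNN']; noncomm_ring
      _ = N * L1 * N⁻¹ * (N * L1 * N⁻¹) := by noncomm_ring
  have hCs : ∀ s : ℚ_[p], N * (s • (1 : Matrix (Fin 2) (Fin 2) ℚ_[p])) * N⁻¹ = s • 1 := by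
    intro s
    rw [Matrix.mul_smul, Matrix.mul_one, Matrix.smul_mul, hNN]
  have hCc : N * (c₁ • L1) * N⁻¹ = c₁ • C := by
    rw [Matrix.mul_smul, Matrix.smul_mul, hC]
  -- key algebraic identity
  have key : (c₂ - c₁) • L2 = X - L2 * D - D * C - t • 1 - c₁ • D := by
    rw [hX, thetaQ, thetaQ]
    simp only [Matrix.mul_add, Matrix.mul_sub, Matrix.add_mul, Matrix.sub_mul]
    rw [hCC, hCs, hCc, hD, ht]
    simp only [mul_sub, sub_mul, smul_sub, sub_smul, div_eq_mul_inv]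
    module
  -- ultrametric helpers
  have triadd : ∀ x y : ℚ_[p], ‖x‖ ≤ ε → ‖y‖ ≤ ε → ‖x + y‖ ≤ ε := fun x y hx hy =>
    le_trans (Padic.nonarchimedean _ _) (max_le hx hy)
  have tri : ∀ x y : ℚ_[p], ‖x‖ ≤ ε → ‖y‖ ≤ ε → ‖x - y‖ ≤ ε := by
    intro x y hx hy
    rw [sub_eq_add_neg]
    exact triadd _ _ hx (by rwa [norm_neg])
  have hmul : ∀ x y : ℚ_[p], ‖x‖ ≤ 1 → ‖y‖ ≤ ε → ‖x * y‖ ≤ ε := by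
    intro x y hx hy
    calc ‖x * y‖ = ‖x‖ * ‖y‖ := norm_mul _ _
      _ ≤ 1 * ε := mul_le_mul hx hy (norm_nonneg _) zero_le_one
      _ = ε := one_mul ε
  -- entry bounds
  have hL2n : ∀ a b, ‖L2 a b‖ ≤ 1 := by
    intro a b
    rw [hL2]
    simp only [toQ, Matrix.map_apply, PadicInt.padic_norm_e_of_padicInt]
    exact PadicInt.norm_le_one _
  have hCn : ∀ a b, ‖C a b‖ ≤ 1 := by
    intro a b
    have hab : C a b = L2 a b - D a b := by rw [hD]; simp [Matrix.sub_apply]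
    rw [hab, sub_eq_add_neg]
    refine le_trans (Padic.nonarchimedean _ _) (max_le (hL2n a b) ?_)
    rw [norm_neg]
    exact le_trans (hi a b) hε1
  have hL2D : ∀ a b, ‖(L2 * D) a b‖ ≤ ε := by
    intro a b
    rw [Matrix.mul_apply, Fin.sum_univ_two]
    exact triadd _ _ (hmul _ _ (hL2n a 0) (hi 0 b)) (hmul _ _ (hL2n a 1) (hi 1 b))
  have hDC : ∀ a b, ‖(D * C) a b‖ ≤ ε := by
    intro a b
    rw [Matrix.mul_apply, Fin.sum_univ_two]
    refine triadd _ _ ?_ ?_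
    · rw [mul_comm]; exact hmul _ _ (hCn 0 b) (hi a 0)
    · rw [mul_comm]; exact hmul _ _ (hCn 1 b) (hi a 1)
  -- norm of 2
  have hpd2 : ¬ ((p : ℤ) ∣ 2) := by
    intro h
    have h' : p ∣ 2 := by exact_mod_cast h
    exact hp ((Nat.prime_dvd_prime_iff_eq (Fact.out : p.Prime) Nat.prime_two).1 h')
  have hnorm2Q : ‖(2 : ℚ_[p])‖ = 1 := by
    have hle : ‖((2 : ℤ) : ℚ_[p])‖ ≤ 1 := Padic.norm_int_le_one _
    have hge : ¬ ‖((2 : ℤ) : ℚ_[p])‖ < 1 := fun hl =>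
      hpd2 ((Padic.norm_intCast_lt_one_iff (k := 2)).1 hl)
    have := le_antisymm hle (not_lt.mp hge)
    simpa using this
  have hnorm2Z : ‖(2 : ℤ_[p])‖ = 1 := by
    have hle : ‖((2 : ℤ) : ℤ_[p])‖ ≤ 1 := PadicInt.norm_le_one _
    have hge : ¬ ‖((2 : ℤ) : ℤ_[p])‖ < 1 := fun hl =>
      hpd2 ((PadicInt.norm_int_lt_one_iff_dvd 2).1 hl)
    have := le_antisymm hle (not_lt.mp hge)
    simpa using this
  -- bound on t
  have htr : ∀ m : Matrix (Fin 2) (Fin 2) ℤ_[p],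
      Matrix.trace (toQ p m * toQ p m) = ((Matrix.trace (m * m) : ℤ_[p]) : ℚ_[p]) := by
    intro m
    simp only [toQ, Matrix.trace_fin_two, Matrix.mul_apply, Fin.sum_univ_two, Matrix.map_apply]
    push_cast
    ring
  have htn : ‖t‖ ≤ ε := by
    have hteq : t = (((Matrix.trace (l₁ * l₁) - Matrix.trace (l₂ * l₂) : ℤ_[p])) : ℚ_[p]) / 2 := by
      rw [ht, hL1, hL2, htr, htr]
      push_cast
      ring
    rw [hteq, norm_div, hnorm2Q, div_one, PadicInt.padic_norm_e_of_padicInt, hεdef,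
      PadicInt.norm_le_pow_iff_mem_span_pow, Ideal.mem_span_singleton]
    exact hii
  have htone : ∀ a b, ‖(t • (1 : Matrix (Fin 2) (Fin 2) ℚ_[p])) a b‖ ≤ ε := by
    intro a b
    by_cases h : a = b
    · simpa [Matrix.smul_apply, Matrix.one_apply, h] using htn
    · simp only [Matrix.smul_apply, Matrix.one_apply, h, if_false, smul_eq_mul, mul_zero,
        norm_zero]
      rw [hεdef]
      positivity
  have hc1n : ‖c₁‖ ≤ 1 := by
    rw [hc₁, PadicInt.padic_norm_e_of_padicInt]
    exact PadicInt.norm_le_one _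
  have hc1D : ∀ a b, ‖(c₁ • D) a b‖ ≤ ε := by
    intro a b
    rw [Matrix.smul_apply, smul_eq_mul]
    exact hmul _ _ hc1n (hi a b)
  -- final assembly
  obtain ⟨i, j, hij⟩ := hiv
  have hentry : ‖((c₂ - c₁) • L2) i j‖ ≤ ε := by
    rw [key]
    simp only [Matrix.sub_apply]
    exact tri _ _ (tri _ _ (tri _ _ (tri _ _ (hiii i j) (hL2D i j)) (hDC i j)) (htone i j))
      (hc1D i j)
  have hL2ij : ‖L2 i j‖ = 1 := by
    rw [hL2]
    simp only [toQ, Matrix.map_apply, PadicInt.padic_norm_e_of_padicInt]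
    refine le_antisymm (PadicInt.norm_le_one _) (not_lt.mp fun hl => ?_)
    exact hij ((PadicInt.norm_lt_one_iff_dvd _).1 hl)
  rw [Matrix.smul_apply, smul_eq_mul, norm_mul, hL2ij, mul_one] at hentry
  have hcast : c₂ - c₁ = ((2 * lam₂ - 2 * lam₁ : ℤ_[p]) : ℚ_[p]) := by
    rw [hc₁, hc₂]
    push_cast
    ring
  rw [hcast, PadicInt.padic_norm_e_of_padicInt] at hentry
  have h2mul : (2 * lam₂ - 2 * lam₁ : ℤ_[p]) = 2 * (lam₂ - lam₁) := by ring
  rw [h2mul, norm_mul, hnorm2Z, one_mul, hεdef,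
    PadicInt.norm_le_pow_iff_mem_span_pow, Ideal.mem_span_singleton] at hentry
  exact dvd_sub_comm.mp hentry
end
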